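/- arXiv:1404.4464 — 8 statements merged into one kernel-verified Lean document; each statement's English description precedes it below -/
import Mathlib

section
/- Let h : [0,T] → ℝ be absolutely continuous with a.e. derivative h' satisfying h'(t) ≥ 0 for a.e. t ∈ [0,T] and h' square integrable. For every θ ∈ [0,T], the function φ⁽θ⁾ defined by φ⁽θ⁾(t) := e^{βt} ( σ(1−γ) ∫_θ^t e^{−β(1−γ)s} h'(s) ds )^{1/(1−γ)} for t ∈ [θ,T] and φ⁽θ⁾(t) := 0 for t ∈ [0,θ) is nonnegative, absolutely continuous on [0,T], satisfies φ⁽θ⁾(0) = 0, and solves the degenerate controlled ODE (φ⁽θ⁾)'(t) = β φ⁽θ⁾(t) + σ (φ⁽θ⁾(t))^γ h'(t) for a.e. t ∈ [0,T]. -/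
open MeasureTheory Set

private lemma ode_engine (a b : ℝ) (hab : a ≤ b) (Φ ρ w : ℝ → ℝ)
    (hρ : IntervalIntegrable ρ volume a b)
    (hw : IntervalIntegrable w volume a b)
    (hw0 : ∀ s t, a ≤ s → s ≤ t → t ≤ b → 0 ≤ ∫ r in s..t, w r)
    (key : ∀ ε > 0, ∃ δ > 0, ∀ s t, a ≤ s → s ≤ t → t ≤ b → t - s ≤ δ →
      |Φ t - Φ s - ∫ r in s..t, ρ r| ≤ ε * ((t - s) + ∫ r in s..t, w r)) :
    Φ b - Φ a = ∫ r in a..b, ρ r := by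
  have C0 : 0 ≤ (b - a) + ∫ r in a..b, w r := by
    have := hw0 a b le_rfl hab le_rfl; linarith
  have main : ∀ ε > 0, |Φ b - Φ a - ∫ r in a..b, ρ r| ≤ ε * ((b - a) + ∫ r in a..b, w r) := by
    intro ε hε
    obtain ⟨δ, hδ, hkey⟩ := key ε hε
    obtain ⟨n, hn⟩ := exists_nat_gt ((b - a) / δ)
    set st : ℝ := (b - a) / (n + 1) with hst
    have hn1 : (0:ℝ) < (n:ℝ) + 1 := by positivity
    have hstpos : 0 ≤ st := div_nonneg (by linarith) hn1.le
    have hba : b - a < (n : ℝ) * δ := by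
      have := (div_lt_iff₀ hδ).mp hn; linarith
    have hstδ : st ≤ δ := by
      rw [hst, div_le_iff₀ hn1]
      nlinarith [hδ.le]
    set tt : ℕ → ℝ := fun i => a + i * st with htt
    have htt0 : tt 0 = a := by simp [htt]
    have httn : tt (n + 1) = b := by
      simp only [htt, hst]
      push_cast
      field_simp
      ring
    have httmono : ∀ i : ℕ, tt i ≤ tt (i + 1) := by
      intro i
      simp only [htt]
      push_cast
      nlinarith [hstpos]
    have hstep : ∀ i : ℕ, tt (i + 1) - tt i = st := by
      intro i; simp only [htt]; push_cast; ring
    have httmem : ∀ i : ℕ, i ≤ n + 1 → tt i ∈ Icc a b := by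
      intro i hi
      have hicast : (i : ℝ) ≤ (n : ℝ) + 1 := by exact_mod_cast hi
      have hi0 : (0:ℝ) ≤ (i:ℝ) := Nat.cast_nonneg i
      have hb' : a + ((n:ℝ) + 1) * st = b := by
        have h2 := httn
        simp only [htt] at h2
        push_cast at h2
        linarith
      constructor
      · simp only [htt]; nlinarith
      · simp only [htt]; nlinarith
    have hsubmem : ∀ i : ℕ, i ≤ n + 1 → tt i ∈ uIcc a b := by
      intro i hi; rw [uIcc_of_le hab]; exact httmem i hi
    have hρi : ∀ k < n + 1, IntervalIntegrable ρ volume (tt k) (tt (k + 1)) := fun k hk =>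
      hρ.mono_set (uIcc_subset_uIcc (hsubmem k (by omega)) (hsubmem (k + 1) (by omega)))
    have hwi : ∀ k < n + 1, IntervalIntegrable w volume (tt k) (tt (k + 1)) := fun k hk =>
      hw.mono_set (uIcc_subset_uIcc (hsubmem k (by omega)) (hsubmem (k + 1) (by omega)))
    have hsumρ : ∑ k ∈ Finset.range (n + 1), ∫ r in tt k..tt (k + 1), ρ r = ∫ r in a..b, ρ r := by
      have := intervalIntegral.sum_integral_adjacent_intervals (μ := volume) (f := ρ) hρi
      rwa [htt0, httn] at this
    have hsumw : ∑ k ∈ Finset.range (n + 1), ∫ r in tt k..tt (k + 1), w r = ∫ r in a..b, w r := by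
      have := intervalIntegral.sum_integral_adjacent_intervals (μ := volume) (f := w) hwi
      rwa [htt0, httn] at this
    have hteleΦ : ∑ k ∈ Finset.range (n + 1), (Φ (tt (k + 1)) - Φ (tt k)) = Φ b - Φ a := by
      rw [Finset.sum_range_sub (fun i => Φ (tt i)), htt0, httn]
    have htele2 : ∑ k ∈ Finset.range (n + 1), (tt (k + 1) - tt k) = b - a := by
      rw [Finset.sum_range_sub tt, htt0, httn]
    calc |Φ b - Φ a - ∫ r in a..b, ρ r|
        = |∑ k ∈ Finset.range (n + 1),
            ((Φ (tt (k + 1)) - Φ (tt k)) - ∫ r in tt k..tt (k + 1), ρ r)| := by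
          rw [Finset.sum_sub_distrib, hteleΦ, hsumρ]
      _ ≤ ∑ k ∈ Finset.range (n + 1),
            |(Φ (tt (k + 1)) - Φ (tt k)) - ∫ r in tt k..tt (k + 1), ρ r| :=
          Finset.abs_sum_le_sum_abs _ _
      _ ≤ ∑ k ∈ Finset.range (n + 1),
            ε * ((tt (k + 1) - tt k) + ∫ r in tt k..tt (k + 1), w r) := by
          apply Finset.sum_le_sum
          intro k hk
          have hk' : k < n + 1 := Finset.mem_range.mp hk
          exact hkey (tt k) (tt (k + 1)) (httmem k (by omega)).1 (httmono k)
            (httmem (k + 1) (by omega)).2 (by rw [hstep k]; exact hstδ)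
      _ = ε * ((b - a) + ∫ r in a..b, w r) := by
          rw [← Finset.mul_sum, Finset.sum_add_distrib, htele2, hsumw]
  by_contra hne
  have hX : Φ b - Φ a - ∫ r in a..b, ρ r ≠ 0 := fun hc => hne (by linarith)
  have habs : 0 < |Φ b - Φ a - ∫ r in a..b, ρ r| := abs_pos.mpr hX
  set D := |Φ b - Φ a - ∫ r in a..b, ρ r| with hD
  set C := (b - a) + ∫ r in a..b, w r with hC
  have hmain := main (D / (2 * (C + 1))) (by positivity)
  rw [div_mul_eq_mul_div, le_div_iff₀ (by positivity)] at hmain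
  nlinarith [mul_nonneg habs.le C0]

private lemma ode_chain (a b : ℝ) (hab : a ≤ b) (f : ℝ → ℝ)
    (hf : IntervalIntegrable f volume a b)
    (u : ℝ → ℝ) (hu : ∀ t ∈ Icc a b, u t = ∫ s in a..t, f s)
    (F F' : ℝ → ℝ) (hF : ∀ x, HasDerivAt F (F' x) x) (hF'c : Continuous F') :
    ∀ t ∈ Icc a b, F (u t) - F (u a) = ∫ s in a..t, F' (u s) * f s := by
  have hmem : ∀ {s : ℝ}, s ∈ Icc a b → s ∈ uIcc a b := fun {s} hs => by
    rwa [uIcc_of_le hab]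
  have haI : a ∈ Icc a b := left_mem_Icc.mpr hab
  have hfsub : ∀ {s t : ℝ}, s ∈ Icc a b → t ∈ Icc a b → IntervalIntegrable f volume s t :=
    fun {s t} hs ht => hf.mono_set (uIcc_subset_uIcc (hmem hs) (hmem ht))
  have hucont : ContinuousOn u (Icc a b) := by
    have h1 := intervalIntegral.continuousOn_primitive_interval' hf
      (left_mem_uIcc (a := a) (b := b))
    rw [uIcc_of_le hab] at h1
    exact h1.congr hu
  have hincr : ∀ {s t : ℝ}, s ∈ Icc a b → t ∈ Icc a b → u t - u s = ∫ r in s..t, f r := by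
    intro s t hs ht
    rw [hu s hs, hu t ht]
    exact intervalIntegral.integral_interval_sub_left (hfsub haI ht) (hfsub haI hs)
  set V : ℝ → ℝ := fun x => ∫ r in a..x, |f r| with hV
  have hVcont : ContinuousOn V (Icc a b) := by
    have h1 := intervalIntegral.continuousOn_primitive_interval' hf.abs
      (left_mem_uIcc (a := a) (b := b))
    rwa [uIcc_of_le hab] at h1
  have hVincr : ∀ {s t : ℝ}, s ∈ Icc a b → t ∈ Icc a b → (∫ r in s..t, |f r|) = V t - V s := by
    intro s t hs ht
    simp only [hV]
    exact (intervalIntegral.integral_interval_sub_left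
      (hf.abs.mono_set (uIcc_subset_uIcc (hmem haI) (hmem ht)))
      (hf.abs.mono_set (uIcc_subset_uIcc (hmem haI) (hmem hs)))).symm
  have huV : ∀ {s t : ℝ}, s ∈ Icc a b → t ∈ Icc a b → s ≤ t → |u t - u s| ≤ V t - V s := by
    intro s t hs ht hst
    rw [hincr hs ht, ← hVincr hs ht]
    exact intervalIntegral.abs_integral_le_integral_abs hst
  -- range bounds
  obtain ⟨xm, hxm, hmOn⟩ := isCompact_Icc.exists_isMinOn (nonempty_Icc.mpr hab) hucont
  obtain ⟨xM, hxM, hMOn⟩ := isCompact_Icc.exists_isMaxOn (nonempty_Icc.mpr hab) hucont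
  set m := u xm with hm
  set M := u xM with hM
  have hmM : m ≤ M := isMinOn_iff.mp hmOn xM hxM
  have hrange : ∀ {s : ℝ}, s ∈ Icc a b → u s ∈ Icc m M := fun {s} hs =>
    ⟨isMinOn_iff.mp hmOn s hs, isMaxOn_iff.mp hMOn s hs⟩
  -- uniform continuity
  have hUC := (isCompact_Icc (a := m) (b := M)).uniformContinuousOn_of_continuous
    hF'c.continuousOn
  rw [Metric.uniformContinuousOn_iff] at hUC
  have hVUC := (isCompact_Icc (a := a) (b := b)).uniformContinuousOn_of_continuous hVcont
  rw [Metric.uniformContinuousOn_iff] at hVUC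
  -- integrability of the integrand
  have hρint : IntervalIntegrable (fun s => F' (u s) * f s) volume a b := by
    apply hf.continuousOn_mul
    rw [uIcc_of_le hab]
    exact hF'c.comp_continuousOn hucont
  intro t ht
  obtain ⟨hta, htb⟩ := ht
  have htI : t ∈ Icc a b := ⟨hta, htb⟩
  apply ode_engine a t hta (fun x => F (u x)) (fun s => F' (u s) * f s) (fun s => |f s|)
    (hρint.mono_set (uIcc_subset_uIcc (hmem haI) (hmem htI)))
    (hf.abs.mono_set (uIcc_subset_uIcc (hmem haI) (hmem htI)))
    (fun s t' hs hst' ht' => intervalIntegral.integral_nonneg hst' (fun r _ => abs_nonneg _))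
  intro ε hε
  obtain ⟨δ₁, hδ₁, hK⟩ := hUC (ε / 2) (by positivity)
  obtain ⟨δ₂, hδ₂, hKV⟩ := hVUC δ₁ hδ₁
  refine ⟨δ₂ / 2, by positivity, ?_⟩
  intro s t' hsa hst htb' hd
  have hsI : s ∈ Icc a b := ⟨hsa, (hst.trans htb').trans htb⟩
  have ht'I : t' ∈ Icc a b := ⟨hsa.trans hst, htb'.trans htb⟩
  have hVosc : V t' - V s < δ₁ := by
    have h1 := hKV t' ht'I s hsI (by rw [Real.dist_eq]; rw [abs_of_nonneg (by linarith)]; linarith)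
    rw [Real.dist_eq] at h1
    calc V t' - V s ≤ |V t' - V s| := le_abs_self _
      _ < δ₁ := h1
  have hosc : ∀ r ∈ Icc s t', |u r - u s| < δ₁ := by
    intro r hr
    have hrI : r ∈ Icc a b := ⟨hsa.trans hr.1, (hr.2.trans htb').trans htb⟩
    have h1 : |u r - u s| ≤ V r - V s := huV hsI hrI hr.1
    have h2 : V r - V s ≤ V t' - V s := by
      have h3 : (0:ℝ) ≤ ∫ x in r..t', |f x| :=
        intervalIntegral.integral_nonneg hr.2 (fun x _ => abs_nonneg _)
      have h4 := hVincr hrI ht'I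
      linarith
    linarith
  have hut' : |u t' - u s| < δ₁ := hosc t' ⟨hst, le_rfl⟩
  -- mean value inequality piece
  have hKuse : ∀ x ∈ uIcc (u s) (u t'), |F' x - F' (u s)| ≤ ε / 2 := by
    intro x hx
    have hxK : x ∈ Icc m M := by
      have hsub2 : uIcc (u s) (u t') ⊆ uIcc m M :=
        uIcc_subset_uIcc (by rw [uIcc_of_le hmM]; exact hrange hsI)
          (by rw [uIcc_of_le hmM]; exact hrange ht'I)
      have := hsub2 hx
      rwa [uIcc_of_le hmM] at this
    have hdx : dist x (u s) < δ₁ := by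
      have h1 := Real.dist_le_of_mem_uIcc hx (left_mem_uIcc (a := u s) (b := u t'))
      have h2 : dist (u s) (u t') < δ₁ := by
        rw [Real.dist_eq, abs_sub_comm]; exact hut'
      linarith
    have := hK x hxK (u s) (hrange hsI) hdx
    rw [Real.dist_eq] at this
    exact this.le
  have hMVT : |F (u t') - F (u s) - F' (u s) * (u t' - u s)| ≤ ε / 2 * |u t' - u s| := by
    have hder : ∀ x ∈ uIcc (u s) (u t'),
        HasDerivWithinAt (fun y => F y - F' (u s) * y) (F' x - F' (u s)) (uIcc (u s) (u t')) x := by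
      intro x hx
      have hd1 : HasDerivAt (fun y => F' (u s) * y) (F' (u s)) x := by
        simpa using (hasDerivAt_id x).const_mul (F' (u s))
      exact ((hF x).sub hd1).hasDerivWithinAt
    have h2 := (convex_uIcc (u s) (u t')).norm_image_sub_le_of_norm_hasDerivWithin_le hder
      (fun x hx => by rw [Real.norm_eq_abs]; exact hKuse x hx)
      left_mem_uIcc right_mem_uIcc
    simp only [Real.norm_eq_abs] at h2
    have heq : F (u t') - F (u s) - F' (u s) * (u t' - u s)
        = (F (u t') - F' (u s) * u t') - (F (u s) - F' (u s) * u s) := by ring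
    rw [heq]
    exact h2
  have hVeq : (∫ r in s..t', |f r|) = V t' - V s := hVincr hsI ht'I
  have hintf : (0:ℝ) ≤ ∫ r in s..t', |f r| :=
    intervalIntegral.integral_nonneg hst (fun r _ => abs_nonneg _)
  have hMVT2 : |F (u t') - F (u s) - F' (u s) * (u t' - u s)| ≤ ε / 2 * ∫ r in s..t', |f r| := by
    have h1 : |u t' - u s| ≤ ∫ r in s..t', |f r| := by
      rw [hVeq]; exact huV hsI ht'I hst
    calc |F (u t') - F (u s) - F' (u s) * (u t' - u s)| ≤ ε / 2 * |u t' - u s| := hMVT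
      _ ≤ ε / 2 * ∫ r in s..t', |f r| := by
        apply mul_le_mul_of_nonneg_left h1 (by positivity)
  -- second piece
  have hii1 : IntervalIntegrable (fun r => F' (u s) * f r) volume s t' :=
    (hfsub hsI ht'I).const_mul _
  have hii2 : IntervalIntegrable (fun r => F' (u r) * f r) volume s t' :=
    hρint.mono_set (uIcc_subset_uIcc (hmem hsI) (hmem ht'I))
  have hterm2 : |∫ r in s..t', (F' (u s) - F' (u r)) * f r| ≤ ε / 2 * ∫ r in s..t', |f r| := by
    have hb : ∀ᵐ r ∂volume.restrict (Set.uIoc s t'), ‖(F' (u s) - F' (u r)) * f r‖ ≤ ε / 2 * |f r| := by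
      rw [ae_restrict_iff' measurableSet_uIoc]
      apply ae_of_all
      intro r hr
      rw [uIoc_of_le hst] at hr
      have hrI : r ∈ Icc s t' := ⟨hr.1.le, hr.2⟩
      have h1 : |F' (u s) - F' (u r)| ≤ ε / 2 := by
        rw [abs_sub_comm]
        have hrI2 : r ∈ Icc a b := ⟨hsa.trans hrI.1, (hrI.2.trans htb').trans htb⟩
        have hdr : dist (u r) (u s) < δ₁ := by
          rw [Real.dist_eq]; exact hosc r hrI
        have := hK (u r) (hrange hrI2) (u s) (hrange hsI) hdr
        rw [Real.dist_eq] at this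
        exact this.le
      rw [Real.norm_eq_abs, abs_mul]
      exact mul_le_mul_of_nonneg_right h1 (abs_nonneg _)
    calc |∫ r in s..t', (F' (u s) - F' (u r)) * f r|
        ≤ abs (∫ r in s..t', ε / 2 * |f r|) := by
          have h2 := intervalIntegral.norm_integral_le_abs_of_norm_le hb
            (((hfsub hsI ht'I).abs).const_mul (ε / 2))
          simpa [Real.norm_eq_abs] using h2
      _ = ε / 2 * ∫ r in s..t', |f r| := by
          rw [intervalIntegral.integral_const_mul]
          exact abs_of_nonneg (mul_nonneg (by positivity) hintf)
  -- assemble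
  have hconst : F' (u s) * (u t' - u s) = ∫ r in s..t', F' (u s) * f r := by
    rw [intervalIntegral.integral_const_mul, ← hincr hsI ht'I]
  have hsplit : (∫ r in s..t', F' (u r) * f r)
      = F' (u s) * (u t' - u s) - ∫ r in s..t', (F' (u s) - F' (u r)) * f r := by
    have hfun : (fun r => (F' (u s) - F' (u r)) * f r)
        = fun r => F' (u s) * f r - F' (u r) * f r := by funext r; ring
    rw [hfun, intervalIntegral.integral_sub hii1 hii2, hconst]
    ring
  have heq2 : F (u t') - F (u s) - ∫ r in s..t', F' (u r) * f r
      = (F (u t') - F (u s) - F' (u s) * (u t' - u s))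
        + ∫ r in s..t', (F' (u s) - F' (u r)) * f r := by
    rw [hsplit]; ring
  rw [heq2]
  calc |(F (u t') - F (u s) - F' (u s) * (u t' - u s))
        + ∫ r in s..t', (F' (u s) - F' (u r)) * f r|
      ≤ |F (u t') - F (u s) - F' (u s) * (u t' - u s)|
        + |∫ r in s..t', (F' (u s) - F' (u r)) * f r| := abs_add_le _ _
    _ ≤ ε / 2 * (∫ r in s..t', |f r|) + ε / 2 * ∫ r in s..t', |f r| := add_le_add hMVT2 hterm2
    _ ≤ ε * ((t' - s) + ∫ r in s..t', |f r|) := by nlinarith [hε.le]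

private lemma ode_prod (a b : ℝ) (hab : a ≤ b) (f : ℝ → ℝ)
    (hf : IntervalIntegrable f volume a b)
    (B : ℝ → ℝ) (hB : ∀ t ∈ Icc a b, B t = ∫ s in a..t, f s)
    (A A' : ℝ → ℝ) (hA : ∀ x, HasDerivAt A (A' x) x) (hA'c : Continuous A') :
    ∀ t ∈ Icc a b, A t * B t - A a * B a = ∫ s in a..t, (A' s * B s + A s * f s) := by
  have hAc : Continuous A := by
    rw [continuous_iff_continuousAt]; exact fun x => (hA x).continuousAt
  have hmem : ∀ {s : ℝ}, s ∈ Icc a b → s ∈ uIcc a b := fun {s} hs => by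
    rwa [uIcc_of_le hab]
  have haI : a ∈ Icc a b := left_mem_Icc.mpr hab
  have hfsub : ∀ {s t : ℝ}, s ∈ Icc a b → t ∈ Icc a b → IntervalIntegrable f volume s t :=
    fun {s t} hs ht => hf.mono_set (uIcc_subset_uIcc (hmem hs) (hmem ht))
  have hBcont : ContinuousOn B (Icc a b) := by
    have h1 := intervalIntegral.continuousOn_primitive_interval' hf
      (left_mem_uIcc (a := a) (b := b))
    rw [uIcc_of_le hab] at h1
    exact h1.congr hB
  have hincr : ∀ {s t : ℝ}, s ∈ Icc a b → t ∈ Icc a b → B t - B s = ∫ r in s..t, f r := by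
    intro s t hs ht
    rw [hB s hs, hB t ht]
    exact intervalIntegral.integral_interval_sub_left (hfsub haI ht) (hfsub haI hs)
  set V : ℝ → ℝ := fun x => ∫ r in a..x, |f r| with hV
  have hVcont : ContinuousOn V (Icc a b) := by
    have h1 := intervalIntegral.continuousOn_primitive_interval' hf.abs
      (left_mem_uIcc (a := a) (b := b))
    rwa [uIcc_of_le hab] at h1
  have hVincr : ∀ {s t : ℝ}, s ∈ Icc a b → t ∈ Icc a b → (∫ r in s..t, |f r|) = V t - V s := by
    intro s t hs ht
    simp only [hV]
    exact (intervalIntegral.integral_interval_sub_left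
      (hf.abs.mono_set (uIcc_subset_uIcc (hmem haI) (hmem ht)))
      (hf.abs.mono_set (uIcc_subset_uIcc (hmem haI) (hmem hs)))).symm
  have hBV : ∀ {s t : ℝ}, s ∈ Icc a b → t ∈ Icc a b → s ≤ t → |B t - B s| ≤ V t - V s := by
    intro s t hs ht hst
    rw [hincr hs ht, ← hVincr hs ht]
    exact intervalIntegral.abs_integral_le_integral_abs hst
  -- sup of |A'|
  obtain ⟨xA, hxA, hxAOn⟩ := isCompact_Icc.exists_isMaxOn (nonempty_Icc.mpr hab)
    (continuous_abs.comp hA'c).continuousOn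
  set CA := |A' xA| with hCA
  have hCA0 : 0 ≤ CA := abs_nonneg _
  have hCAb : ∀ x ∈ Icc a b, |A' x| ≤ CA := fun x hx => isMaxOn_iff.mp hxAOn x hx
  -- uniform continuity of A and V
  have hAUC := (isCompact_Icc (a := a) (b := b)).uniformContinuousOn_of_continuous
    hAc.continuousOn
  rw [Metric.uniformContinuousOn_iff] at hAUC
  have hVUC := (isCompact_Icc (a := a) (b := b)).uniformContinuousOn_of_continuous hVcont
  rw [Metric.uniformContinuousOn_iff] at hVUC
  -- integrability of integrand
  have hρ1 : IntervalIntegrable (fun s => A' s * B s) volume a b := by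
    apply ContinuousOn.intervalIntegrable
    rw [uIcc_of_le hab]
    exact hA'c.continuousOn.mul hBcont
  have hρ2 : IntervalIntegrable (fun s => A s * f s) volume a b := by
    apply hf.continuousOn_mul
    exact hAc.continuousOn
  have hρint : IntervalIntegrable (fun s => A' s * B s + A s * f s) volume a b := hρ1.add hρ2
  intro t ht
  obtain ⟨hta, htb⟩ := ht
  have htI : t ∈ Icc a b := ⟨hta, htb⟩
  apply ode_engine a t hta (fun x => A x * B x) (fun s => A' s * B s + A s * f s) (fun s => |f s|)
    (hρint.mono_set (uIcc_subset_uIcc (hmem haI) (hmem htI)))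
    (hf.abs.mono_set (uIcc_subset_uIcc (hmem haI) (hmem htI)))
    (fun s t' hs hst' ht' => intervalIntegral.integral_nonneg hst' (fun r _ => abs_nonneg _))
  intro ε hε
  obtain ⟨δ₁, hδ₁, hKA⟩ := hAUC (ε / 2) (by positivity)
  obtain ⟨δ₂, hδ₂, hKV⟩ := hVUC (ε / (2 * (CA + 1))) (by positivity)
  refine ⟨min δ₁ δ₂ / 2, by positivity, ?_⟩
  intro s t' hsa hst htb' hd
  have hsI : s ∈ Icc a b := ⟨hsa, (hst.trans htb').trans htb⟩
  have ht'I : t' ∈ Icc a b := ⟨hsa.trans hst, htb'.trans htb⟩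
  have hintf : (0:ℝ) ≤ ∫ r in s..t', |f r| :=
    intervalIntegral.integral_nonneg hst (fun r _ => abs_nonneg _)
  -- oscillation of A on [s,t']
  have hoscA : ∀ r ∈ Icc s t', |A t' - A r| ≤ ε / 2 := by
    intro r hr
    have hrI : r ∈ Icc a b := ⟨hsa.trans hr.1, (hr.2.trans htb').trans htb⟩
    have := hKA t' ht'I r hrI (by
      rw [Real.dist_eq, abs_of_nonneg (by linarith [hr.2])]
      have h1 : min δ₁ δ₂ ≤ δ₁ := min_le_left _ _
      linarith [hr.1])
    rw [Real.dist_eq] at this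
    exact this.le
  -- oscillation of B on [s,t']
  have hVosc : V t' - V s < ε / (2 * (CA + 1)) := by
    have h1 := hKV t' ht'I s hsI (by
      rw [Real.dist_eq, abs_of_nonneg (by linarith)]
      have h1 : min δ₁ δ₂ ≤ δ₂ := min_le_right _ _
      linarith)
    rw [Real.dist_eq] at h1
    calc V t' - V s ≤ |V t' - V s| := le_abs_self _
      _ < _ := h1
  have hoscB : ∀ r ∈ Icc s t', |B s - B r| ≤ ε / (2 * (CA + 1)) := by
    intro r hr
    have hrI : r ∈ Icc a b := ⟨hsa.trans hr.1, (hr.2.trans htb').trans htb⟩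
    have h1 : |B r - B s| ≤ V r - V s := hBV hsI hrI hr.1
    have h2 : V r - V s ≤ V t' - V s := by
      have h3 : (0:ℝ) ≤ ∫ x in r..t', |f x| :=
        intervalIntegral.integral_nonneg hr.2 (fun x _ => abs_nonneg _)
      have h4 := hVincr hrI ht'I
      linarith
    rw [abs_sub_comm]
    linarith
  -- integrability on [s,t']
  have hi1 : IntervalIntegrable (fun r => A' r * B r) volume s t' :=
    hρ1.mono_set (uIcc_subset_uIcc (hmem hsI) (hmem ht'I))
  have hi2 : IntervalIntegrable (fun r => A r * f r) volume s t' :=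
    hρ2.mono_set (uIcc_subset_uIcc (hmem hsI) (hmem ht'I))
  have hA'ii : IntervalIntegrable A' volume s t' := hA'c.intervalIntegrable s t'
  have hAint : (∫ r in s..t', A' r) = A t' - A s :=
    intervalIntegral.integral_eq_sub_of_hasDerivAt (fun x _ => hA x) hA'ii
  -- split
  have hsplit : A t' * B t' - A s * B s - ∫ r in s..t', (A' r * B r + A r * f r)
      = (∫ r in s..t', (A t' - A r) * f r) + ∫ r in s..t', A' r * (B s - B r) := by
    have h1 : ∫ r in s..t', (A' r * B r + A r * f r)
        = (∫ r in s..t', A' r * B r) + ∫ r in s..t', A r * f r :=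
      intervalIntegral.integral_add hi1 hi2
    have h2 : ∫ r in s..t', (A t' - A r) * f r
        = A t' * (B t' - B s) - ∫ r in s..t', A r * f r := by
      have hfun : (fun r => (A t' - A r) * f r) = fun r => A t' * f r - A r * f r := by
        funext r; ring
      rw [hfun, intervalIntegral.integral_sub ((hfsub hsI ht'I).const_mul _) hi2,
        intervalIntegral.integral_const_mul, ← hincr hsI ht'I]
    have h3 : ∫ r in s..t', A' r * (B s - B r)
        = (A t' - A s) * B s - ∫ r in s..t', A' r * B r := by
      have hfun : (fun r => A' r * (B s - B r)) = fun r => A' r * B s - A' r * B r := by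
        funext r; ring
      rw [hfun, intervalIntegral.integral_sub (hA'ii.mul_const _) hi1,
        intervalIntegral.integral_mul_const, hAint]
    rw [h1, h2, h3]
    ring
  -- bound first piece
  have hb1 : |∫ r in s..t', (A t' - A r) * f r| ≤ ε / 2 * ∫ r in s..t', |f r| := by
    have hb : ∀ᵐ r ∂volume.restrict (Set.uIoc s t'), ‖(A t' - A r) * f r‖ ≤ ε / 2 * |f r| := by
      rw [ae_restrict_iff' measurableSet_uIoc]
      apply ae_of_all
      intro r hr
      rw [uIoc_of_le hst] at hr
      rw [Real.norm_eq_abs, abs_mul]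
      exact mul_le_mul_of_nonneg_right (hoscA r ⟨hr.1.le, hr.2⟩) (abs_nonneg _)
    calc |∫ r in s..t', (A t' - A r) * f r|
        ≤ abs (∫ r in s..t', ε / 2 * |f r|) := by
          have h2 := intervalIntegral.norm_integral_le_abs_of_norm_le hb
            (((hfsub hsI ht'I).abs).const_mul (ε / 2))
          simpa [Real.norm_eq_abs] using h2
      _ = ε / 2 * ∫ r in s..t', |f r| := by
          rw [intervalIntegral.integral_const_mul]
          exact abs_of_nonneg (mul_nonneg (by positivity) hintf)
  -- bound second piece
  have hb2 : |∫ r in s..t', A' r * (B s - B r)| ≤ ε / 2 * (t' - s) := by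
    have hb : ∀ x ∈ Set.uIoc s t', ‖A' x * (B s - B x)‖ ≤ ε / 2 := by
      intro r hr
      rw [uIoc_of_le hst] at hr
      have hrI : r ∈ Icc a b := ⟨hsa.trans hr.1.le, (hr.2.trans htb').trans htb⟩
      rw [Real.norm_eq_abs, abs_mul]
      calc |A' r| * |B s - B r| ≤ CA * (ε / (2 * (CA + 1))) := by
            apply mul_le_mul (hCAb r hrI) (hoscB r ⟨hr.1.le, hr.2⟩) (abs_nonneg _) hCA0
        _ ≤ ε / 2 := by
            rw [mul_comm, div_mul_eq_mul_div,
              div_le_div_iff₀ (by positivity) (by norm_num : (0:ℝ) < 2)]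
            nlinarith [hε.le, hCA0]
    have h2 := intervalIntegral.norm_integral_le_of_norm_le_const hb
    rw [Real.norm_eq_abs] at h2
    calc |∫ r in s..t', A' r * (B s - B r)| ≤ ε / 2 * |t' - s| := h2
      _ = ε / 2 * (t' - s) := by rw [abs_of_nonneg (by linarith)]
  rw [hsplit]
  calc |(∫ r in s..t', (A t' - A r) * f r) + ∫ r in s..t', A' r * (B s - B r)|
      ≤ |∫ r in s..t', (A t' - A r) * f r| + |∫ r in s..t', A' r * (B s - B r)| := abs_add_le _ _
    _ ≤ ε / 2 * (∫ r in s..t', |f r|) + ε / 2 * (t' - s) := add_le_add hb1 hb2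
    _ ≤ ε * ((t' - s) + ∫ r in s..t', |f r|) := by nlinarith [hε.le, hintf]

private lemma ode_cont_rpow {q : ℝ} (hq : 0 ≤ q) : Continuous fun x : ℝ => x ^ q := by
  rw [continuous_iff_continuousAt]
  exact fun x => Real.continuousAt_rpow_const x q (Or.inr hq)


/-- For nonnegative control `h'`, each member `φ⁽θ⁾` of the one-parameter
family is a nonnegative absolutely continuous solution, vanishing at 0, of the degenerate
controlled ODE `φ' = βφ + σ φ^γ h'` a.e. on `[0,T]`. -/
theorem one_parameter_family_solves_degenerate_ODE
    (σ β γ T : ℝ) (hσ : 0 < σ) (hγ : γ ∈ Set.Ico (1/2 : ℝ) 1) (hT : 0 < T)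
    (h h' : ℝ → ℝ)
    (hL2 : MeasureTheory.MemLp h' 2 (volume.restrict (Set.Icc 0 T)))
    (hhftc : ∀ t ∈ Set.Icc 0 T, h t = h 0 + ∫ s in (0:ℝ)..t, h' s)
    (hpos : ∀ᵐ t ∂(volume.restrict (Set.Icc 0 T)), 0 ≤ h' t)
    (θ : ℝ) (hθ : θ ∈ Set.Icc 0 T)
    (φ : ℝ → ℝ)
    (hφ : ∀ t, φ t = if t < θ then 0 else
      Real.exp (β * t) *
        (σ * (1 - γ) * ∫ s in θ..t, Real.exp (-β * (1 - γ) * s) * h' s) ^ (1/(1 - γ))) :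
    (∀ t ∈ Set.Icc 0 T, 0 ≤ φ t) ∧ φ 0 = 0 ∧
    ∃ φ' : ℝ → ℝ, IntervalIntegrable φ' volume 0 T ∧
      (∀ t ∈ Set.Icc 0 T, φ t = ∫ s in (0:ℝ)..t, φ' s) ∧
      (∀ᵐ t ∂(volume.restrict (Set.Icc 0 T)),
        φ' t = β * φ t + σ * φ t ^ γ * h' t) := by
  obtain ⟨hγ0, hγ1⟩ := hγ
  obtain ⟨hθ0, hθT⟩ := hθ
  have h1γ : 0 < 1 - γ := by linarith
  have hγpos : 0 < γ := by linarith
  set p : ℝ := 1 / (1 - γ) with hp'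
  have hp0 : 0 < p := by positivity
  have hp1 : 1 ≤ p := by
    rw [hp', le_div_iff₀ h1γ, one_mul]; linarith
  have hpne : p ≠ 0 := ne_of_gt hp0
  have hpinv : p * (1 - γ) = 1 := by rw [hp']; field_simp
  have hpγ : p * γ = p - 1 := by rw [hp']; field_simp; ring
  set c : ℝ := β * (1 - γ) with hc'
  have hcp : p * c = β := by rw [hc', hp']; field_simp
  -- basic integrability
  haveI : IsFiniteMeasure (volume.restrict (Icc (0:ℝ) T)) :=
    ⟨by rw [Measure.restrict_apply_univ]; exact measure_Icc_lt_top⟩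
  have hh'int : IntegrableOn h' (Icc 0 T) := hL2.integrable (by norm_num)
  have hh'ii : IntervalIntegrable h' volume 0 T := by
    apply MeasureTheory.IntegrableOn.intervalIntegrable
    rwa [uIcc_of_le hT.le]
  set f₀ : ℝ → ℝ := fun s => Real.exp (-β * (1 - γ) * s) * h' s with hf₀'
  have hf₀ii : IntervalIntegrable f₀ volume 0 T := by
    apply hh'ii.continuousOn_mul
    exact (Real.continuous_exp.comp (by fun_prop)).continuousOn
  have hmem0T : ∀ {s : ℝ}, s ∈ Icc 0 T → s ∈ uIcc (0:ℝ) T := fun {s} hs => by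
    rwa [uIcc_of_le hT.le]
  have hθI : θ ∈ Icc (0:ℝ) T := ⟨hθ0, hθT⟩
  have hTI : T ∈ Icc (0:ℝ) T := right_mem_Icc.mpr hT.le
  have hf₀pos : ∀ᵐ s ∂(volume.restrict (Icc (0:ℝ) T)), 0 ≤ f₀ s :=
    hpos.mono fun s hs => mul_nonneg (Real.exp_pos _).le hs
  have hint_nonneg : ∀ {s t : ℝ}, s ∈ Icc 0 T → t ∈ Icc 0 T → s ≤ t →
      0 ≤ ∫ r in s..t, f₀ r := by
    intro s t hs ht hst
    apply intervalIntegral.integral_nonneg_of_ae_restrict hst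
    exact (ae_restrict_of_ae_restrict_of_subset (Icc_subset_Icc hs.1 ht.2) hf₀pos).mono
      fun x hx => hx
  set u : ℝ → ℝ := fun t => σ * (1 - γ) * ∫ s in θ..t, f₀ s with hu'
  have hφu : ∀ t, φ t = if t < θ then 0 else Real.exp (β * t) * u t ^ p := fun t => hφ t
  have huθ : u θ = 0 := by
    show σ * (1 - γ) * ∫ s in θ..θ, f₀ s = 0
    rw [intervalIntegral.integral_same, mul_zero]
  have hu_nonneg : ∀ t ∈ Icc θ T, 0 ≤ u t := fun t ht =>
    mul_nonneg (mul_nonneg hσ.le h1γ.le)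
      (hint_nonneg hθI ⟨hθ0.trans ht.1, ht.2⟩ ht.1)
  have hucont : ContinuousOn u (Icc 0 T) := by
    show ContinuousOn (fun t => σ * (1 - γ) * ∫ s in θ..t, f₀ s) (Icc 0 T)
    apply continuousOn_const.mul
    have h1 := intervalIntegral.continuousOn_primitive_interval' hf₀ii
      (by rw [uIcc_of_le hT.le]; exact hθI)
    rwa [uIcc_of_le hT.le] at h1
  -- product rule step
  have hF1ii : IntervalIntegrable (fun s => σ * (1 - γ) * f₀ s) volume θ T :=
    (hf₀ii.const_mul (σ * (1 - γ))).mono_set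
      (uIcc_subset_uIcc (hmem0T hθI) (hmem0T hTI))
  have hB : ∀ t ∈ Icc θ T, u t = ∫ s in θ..t, σ * (1 - γ) * f₀ s := fun t _ =>
    (intervalIntegral.integral_const_mul _ _).symm
  have hA : ∀ x : ℝ, HasDerivAt (fun s => Real.exp (c * s)) (c * Real.exp (c * x)) x := by
    intro x
    simpa [mul_comm] using ((hasDerivAt_id x).const_mul c).exp
  have hA'c : Continuous fun s => c * Real.exp (c * s) := by fun_prop
  have hprod := ode_prod θ T hθT (fun s => σ * (1 - γ) * f₀ s) hF1ii u hB
    (fun s => Real.exp (c * s)) (fun s => c * Real.exp (c * s)) hA hA'c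
  have hv_mem : ∀ t ∈ Icc θ T, Real.exp (c * t) * u t
      = ∫ s in θ..t, (c * Real.exp (c * s) * u s + Real.exp (c * s) * (σ * (1 - γ) * f₀ s)) := by
    intro t ht
    have h2 := hprod t ht
    rw [huθ, mul_zero, sub_zero] at h2
    exact h2
  -- chain rule step
  have hgii : IntervalIntegrable
      (fun s => c * Real.exp (c * s) * u s + Real.exp (c * s) * (σ * (1 - γ) * f₀ s))
      volume θ T := by
    apply IntervalIntegrable.add
    · apply ContinuousOn.intervalIntegrable
      rw [uIcc_of_le hθT]
      exact (by fun_prop : Continuous fun s => c * Real.exp (c * s)).continuousOn.mul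
        (hucont.mono (Icc_subset_Icc hθ0 le_rfl))
    · apply hF1ii.continuousOn_mul
      exact (Real.continuous_exp.comp (by fun_prop)).continuousOn
  have hFd : ∀ x : ℝ, HasDerivAt (fun x : ℝ => x ^ p) (p * x ^ (p - 1)) x := fun x =>
    Real.hasDerivAt_rpow_const (Or.inr hp1)
  have hF'c : Continuous fun x : ℝ => p * x ^ (p - 1) :=
    continuous_const.mul (ode_cont_rpow (by linarith))
  have hchain := ode_chain θ T hθT
    (fun s => c * Real.exp (c * s) * u s + Real.exp (c * s) * (σ * (1 - γ) * f₀ s)) hgii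
    (fun t => Real.exp (c * t) * u t) hv_mem
    (fun x => x ^ p) (fun x => p * x ^ (p - 1)) hFd hF'c
  -- pointwise identities
  have hφv : ∀ t ∈ Icc θ T, φ t = (Real.exp (c * t) * u t) ^ p := by
    intro t ht
    rw [hφu t, if_neg (not_lt.mpr ht.1)]
    rw [Real.mul_rpow (Real.exp_nonneg _) (hu_nonneg t ht), ← Real.exp_mul]
    have harg : β * t = c * t * p := by
      rw [hc']; linear_combination (-(β * t)) * hpinv
    rw [harg]
  have hintegrand : ∀ s ∈ Icc θ T,
      p * (Real.exp (c * s) * u s) ^ (p - 1)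
        * (c * Real.exp (c * s) * u s + Real.exp (c * s) * (σ * (1 - γ) * f₀ s))
      = β * φ s + σ * φ s ^ γ * h' s := by
    intro s hs
    have hx : 0 ≤ Real.exp (c * s) * u s := mul_nonneg (Real.exp_nonneg _) (hu_nonneg s hs)
    set x := Real.exp (c * s) * u s with hxdef
    have hφs : φ s = x ^ p := hφv s hs
    have hφγ : φ s ^ γ = x ^ (p - 1) := by
      rw [hφs, ← Real.rpow_mul hx, hpγ]
    have hxp : x ^ (p - 1) * x = x ^ p := by
      have h1 : x ^ (p - 1 + 1) = x ^ (p - 1) * x ^ (1:ℝ) :=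
        Real.rpow_add' hx (by rw [sub_add_cancel]; exact hpne)
      rw [Real.rpow_one] at h1
      rw [← h1]
      congr 1
      ring
    have hF1s : Real.exp (c * s) * (σ * (1 - γ) * f₀ s) = σ * (1 - γ) * h' s := by
      simp only [hf₀']
      have he : Real.exp (c * s) * Real.exp (-β * (1 - γ) * s) = 1 := by
        rw [← Real.exp_add, show c * s + -β * (1 - γ) * s = 0 by rw [hc']; ring]
        exact Real.exp_zero
      calc Real.exp (c * s) * (σ * (1 - γ) * (Real.exp (-β * (1 - γ) * s) * h' s))
          = (Real.exp (c * s) * Real.exp (-β * (1 - γ) * s)) * (σ * (1 - γ) * h' s) := by ring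
        _ = σ * (1 - γ) * h' s := by rw [he]; ring
    have hcx : c * Real.exp (c * s) * u s = c * x := by rw [hxdef]; ring
    rw [hcx, hF1s, hφγ, hφs]
    linear_combination (p * c) * hxp + x ^ p * hcp + (σ * x ^ (p - 1) * h' s) * hpinv
  -- the main FTC identity on [θ, T]
  have hmain : ∀ t ∈ Icc θ T, φ t = ∫ s in θ..t, (β * φ s + σ * φ s ^ γ * h' s) := by
    intro t ht
    have h2 : (Real.exp (c * t) * u t) ^ p - (Real.exp (c * θ) * u θ) ^ p
        = ∫ s in θ..t, p * (Real.exp (c * s) * u s) ^ (p - 1)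
            * (c * Real.exp (c * s) * u s + Real.exp (c * s) * (σ * (1 - γ) * f₀ s)) :=
      hchain t ht
    rw [huθ, mul_zero, Real.zero_rpow hpne, sub_zero] at h2
    rw [hφv t ht, h2]
    apply intervalIntegral.integral_congr
    intro s hs
    rw [uIcc_of_le ht.1] at hs
    exact hintegrand s ⟨hs.1, hs.2.trans ht.2⟩
  -- representation of φ via max, continuity
  have hφmax : ∀ t ∈ Icc 0 T, φ t = Real.exp (β * t) * max (u t) 0 ^ p := by
    intro t ht
    rcases lt_or_ge t θ with hlt | hge
    · rw [hφu t, if_pos hlt]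
      have hneg : u t ≤ 0 := by
        show σ * (1 - γ) * ∫ s in θ..t, f₀ s ≤ 0
        rw [intervalIntegral.integral_symm]
        have h2 : 0 ≤ ∫ s in t..θ, f₀ s := hint_nonneg ht hθI hlt.le
        nlinarith [mul_nonneg hσ.le h1γ.le]
      rw [max_eq_right hneg, Real.zero_rpow hpne, mul_zero]
    · rw [hφu t, if_neg (not_lt.mpr hge), max_eq_left (hu_nonneg t ⟨hge, ht.2⟩)]
  have hφcont : ContinuousOn φ (Icc 0 T) := by
    have h1 : ContinuousOn (fun t => Real.exp (β * t) * max (u t) 0 ^ p) (Icc 0 T) :=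
      (Real.continuous_exp.comp (by fun_prop)).continuousOn.mul
        ((ode_cont_rpow hp0.le).comp_continuousOn ((continuous_id.max continuous_const).comp_continuousOn hucont))
    exact h1.congr fun t ht => hφmax t ht
  -- vanishing below θ
  have hφ0 : ∀ s, s ≤ θ → φ s = 0 := by
    intro s hs
    rcases lt_or_eq_of_le hs with hlt | heq
    · rw [hφu s, if_pos hlt]
    · rw [hφu s, if_neg (by simp [heq]), heq, huθ, Real.zero_rpow hpne, mul_zero]
  have hφ'0 : ∀ s, s ≤ θ → β * φ s + σ * φ s ^ γ * h' s = 0 := by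
    intro s hs
    rw [hφ0 s hs, Real.zero_rpow (ne_of_gt hγpos)]
    ring
  -- integrability of the candidate derivative
  have hii : IntervalIntegrable (fun s => β * φ s + σ * φ s ^ γ * h' s) volume 0 T := by
    apply IntervalIntegrable.add
    · apply ContinuousOn.intervalIntegrable
      rw [uIcc_of_le hT.le]
      exact continuousOn_const.mul hφcont
    · apply hh'ii.continuousOn_mul
      rw [uIcc_of_le hT.le]
      exact continuousOn_const.mul ((ode_cont_rpow hγpos.le).comp_continuousOn hφcont)
  refine ⟨?_, hφ0 0 hθ0, fun s => β * φ s + σ * φ s ^ γ * h' s, hii, ?_, ?_⟩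
  · intro t ht
    rw [hφmax t ht]
    exact mul_nonneg (Real.exp_nonneg _) (Real.rpow_nonneg (le_max_right _ _) _)
  · intro t ht
    rcases lt_or_ge t θ with hlt | hge
    · rw [hφ0 t hlt.le]
      rw [intervalIntegral.integral_congr (g := fun _ => (0:ℝ)) ?_,
        intervalIntegral.integral_zero]
      intro s hs
      rw [uIcc_of_le ht.1] at hs
      exact hφ'0 s (hs.2.trans hlt.le)
    · have hiiθ : IntervalIntegrable (fun s => β * φ s + σ * φ s ^ γ * h' s) volume 0 θ :=
        hii.mono_set (uIcc_subset_uIcc (hmem0T (left_mem_Icc.mpr hT.le)) (hmem0T hθI))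
      have hiiθt : IntervalIntegrable (fun s => β * φ s + σ * φ s ^ γ * h' s) volume θ t :=
        hii.mono_set (uIcc_subset_uIcc (hmem0T hθI) (hmem0T ht))
      rw [← intervalIntegral.integral_add_adjacent_intervals hiiθ hiiθt]
      have hz : (∫ s in (0:ℝ)..θ, (β * φ s + σ * φ s ^ γ * h' s)) = 0 := by
        rw [intervalIntegral.integral_congr (g := fun _ => (0:ℝ)) ?_,
          intervalIntegral.integral_zero]
        intro s hs
        rw [uIcc_of_le hθ0] at hs
        exact hφ'0 s hs.2
      rw [hz, zero_add]
      exact hmain t ⟨hge, ht.2⟩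
  · exact Filter.Eventually.of_forall fun t => rfl
end

section
/- Let (Ω, 𝓕, P) be a probability space, F : Ω → [0,∞) a measurable function with ∫ F dP = 1 such that F·log F is P-integrable, and let Q be the probability measure with dQ = F dP. Set H(Q|P) := ∫ F log F dP. Then for every measurable set A ∈ 𝓕 with Q(A) > 0 one has log( P(A) / Q(A) ) ≥ −( e^{−1} + H(Q|P) ) / Q(A). -/
open MeasureTheory

lemma tangent_line_bound (c : ℝ) (hc : 0 < c) (x : ℝ) (hx : 0 ≤ x) :
    x * (Real.log c + 1) - c ≤ x * Real.log x := by
  rcases hx.eq_or_lt with h | h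
  · simp [← h]
    linarith
  · have hlog := Real.log_le_sub_one_of_pos (div_pos hc h)
    rw [Real.log_div hc.ne' h.ne'] at hlog
    have hcx : x * (c / x) = c := by field_simp
    nlinarith [mul_le_mul_of_nonneg_left hlog h.le]

lemma mul_log_ge_neg_inv_exp (x : ℝ) (hx : 0 ≤ x) :
    -Real.exp (-1) ≤ x * Real.log x := by
  have := tangent_line_bound (Real.exp (-1)) (Real.exp_pos _) x hx
  rw [Real.log_exp] at this
  linarith

/-- Relative entropy lower bound:
`log(P(A)/Q(A)) ≥ −(e⁻¹ + H(Q|P))/Q(A)` where `dQ = F dP` and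
`H(Q|P) = ∫ F log F dP`. -/
theorem relative_entropy_bound
    {Ω : Type*} [MeasurableSpace Ω]
    (P : Measure Ω) [IsProbabilityMeasure P]
    (F : Ω → ℝ) (hFmeas : Measurable F) (hFnn : ∀ ω, 0 ≤ F ω)
    (hFone : ∫ ω, F ω ∂P = 1)
    (hent : Integrable (fun ω => F ω * Real.log (F ω)) P)
    (Q : Measure Ω) (hQ : Q = P.withDensity (fun ω => ENNReal.ofReal (F ω)))
    (A : Set Ω) (hA : MeasurableSet A) (hQA : 0 < (Q A).toReal) :
    Real.log ((P A).toReal / (Q A).toReal) ≥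
      -(Real.exp (-1) + ∫ ω, F ω * Real.log (F ω) ∂P) / (Q A).toReal := by
  have hFint : Integrable F P := by
    by_contra h
    rw [integral_undef h] at hFone
    norm_num at hFone
  -- Q A as a set integral
  have hQA_eq : (Q A).toReal = ∫ ω in A, F ω ∂P := by
    rw [hQ, withDensity_apply _ hA,
      ← ofReal_integral_eq_lintegral_ofReal hFint.restrict
        (Filter.Eventually.of_forall hFnn),
      ENNReal.toReal_ofReal (setIntegral_nonneg hA fun ω _ => hFnn ω)]
  set a := (P A).toReal with ha_def
  set b := (Q A).toReal with hb_def
  have hb : 0 < b := hQA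
  have hPA0 : P A ≠ 0 := by
    intro h
    rw [hQA_eq, Measure.restrict_eq_zero.mpr h] at hQA
    simp at hQA
  have ha : 0 < a := ENNReal.toReal_pos hPA0 (measure_ne_top P A)
  set c := b / a with hc_def
  have hc : 0 < c := div_pos hb ha
  -- integral over A
  have hgint : Integrable (fun ω => F ω * (Real.log c + 1) - c) (P.restrict A) :=
    (hFint.restrict.mul_const _).sub (integrable_const c)
  have h1 : ∫ ω in A, (F ω * (Real.log c + 1) - c) ∂P
      ≤ ∫ ω in A, F ω * Real.log (F ω) ∂P :=
    integral_mono hgint hent.restrict (fun ω => tangent_line_bound c hc (F ω) (hFnn ω))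
  have h2 : ∫ ω in A, (F ω * (Real.log c + 1) - c) ∂P = b * Real.log c := by
    rw [integral_sub (hFint.restrict.mul_const _) (integrable_const c),
      integral_mul_const, setIntegral_const, ← hQA_eq]
    simp only [smul_eq_mul, show P.real A = (P A).toReal from rfl, ← ha_def, ← hb_def, hc_def]
    field_simp
    ring
  have hbound1 : b * Real.log c ≤ ∫ ω in A, F ω * Real.log (F ω) ∂P := h2 ▸ h1
  -- integral over Aᶜ
  have h3 : ∫ ω in Aᶜ, (-Real.exp (-1)) ∂P ≤ ∫ ω in Aᶜ, F ω * Real.log (F ω) ∂P :=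
    integral_mono (integrable_const _) hent.restrict
      (fun ω => mul_log_ge_neg_inv_exp (F ω) (hFnn ω))
  have h4 : -Real.exp (-1) ≤ ∫ ω in Aᶜ, F ω * Real.log (F ω) ∂P := by
    rw [setIntegral_const, smul_eq_mul] at h3
    have h5 : (P Aᶜ).toReal ≤ 1 := by
      have := prob_le_one (μ := P) (s := Aᶜ)
      simpa using ENNReal.toReal_le_of_le_ofReal one_pos.le (by simpa using this)
    have h6 : 0 ≤ (P Aᶜ).toReal := ENNReal.toReal_nonneg
    have := Real.exp_pos (-1)
    nlinarith [h3, show P.real Aᶜ = (P Aᶜ).toReal from rfl]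
  have hsplit : (∫ ω in A, F ω * Real.log (F ω) ∂P)
      + ∫ ω in Aᶜ, F ω * Real.log (F ω) ∂P = ∫ ω, F ω * Real.log (F ω) ∂P :=
    integral_add_compl hA hent
  have hkey : b * Real.log c ≤ Real.exp (-1) + ∫ ω, F ω * Real.log (F ω) ∂P := by
    linarith
  have hlog : Real.log (a / b) = -Real.log c := by
    rw [hc_def, Real.log_div hb.ne' ha.ne', Real.log_div ha.ne' hb.ne']
    ring
  rw [ge_iff_le, hlog, div_le_iff₀ hb, neg_mul]
  nlinarith [hkey]
end

section
/- Let φ : [0,T] → [0,∞) be absolutely continuous with φ(0) = 0 and I_T(φ) < ∞. Define h₀ by h₀(0) = 0 and h₀'(t) := ((φ'(t) − βφ(t))/(σ φ(t)^γ)) · 1_{φ(t)≠0}. Then: (i) h₀ ∈ H; (ii) φ'(t) = βφ(t) + σ φ(t)^γ h₀'(t) for a.e. t ∈ [0,T]; (iii) (1/2)∫₀ᵀ h₀'(t)² dt = I_T(φ); and (iv) for every h ∈ H satisfying φ'(t) = βφ(t) + σ φ(t)^γ h'(t) for a.e. t ∈ [0,T], one has (1/2)∫₀ᵀ h'(t)²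 dt ≥ I_T(φ). Hence I_T(φ) = min{ (1/2)∫₀ᵀ h'(t)² dt : h ∈ H, φ'(t) = βφ(t) + σφ(t)^γ h'(t) a.e. }. -/
open MeasureTheory Set Metric Filter Topology ENNReal

lemma ae_zero_on_zero_set (g : ℝ → ℝ) (hg : Integrable g volume) (E : Set ℝ)
    (hmeas : MeasurableSet E)
    (hE : ∀ s ∈ E, (∫ u in (0:ℝ)..s, g u) = 0) :
    ∀ᵐ t ∂(volume.restrict E), g t = 0 := by
  have hloc : LocallyIntegrable g volume := hg.locallyIntegrable
  have hleb : ∀ᵐ t ∂volume,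
      Tendsto (fun r => ⨍ y in closedBall t r, ‖g y - g t‖) (𝓝[>] 0) (𝓝 0) := by
    filter_upwards [(Besicovitch.vitaliFamily volume).ae_tendsto_average_norm_sub hloc]
      with t ht
    exact ht.comp (Besicovitch.tendsto_filterAt volume t)
  filter_upwards [ae_restrict_mem hmeas, Besicovitch.ae_tendsto_measure_inter_div volume E,
    ae_restrict_of_ae hleb] with t htE hdens hlebt
  by_contra hne
  have hc : 0 < ‖g t‖ := norm_pos_iff.mpr hne
  set c := ‖g t‖ with hcdef
  have h1 : ∀ᶠ r in 𝓝[>] (0:ℝ), ⨍ y in closedBall t r, ‖g y - g t‖ < c/8 :=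
    hlebt.eventually (gt_mem_nhds (by positivity))
  have h2 : ∀ᶠ r in 𝓝[>] (0:ℝ),
      (3/4 : ℝ≥0∞) < volume (E ∩ closedBall t r) / volume (closedBall t r) :=
    hdens.eventually (lt_mem_nhds (by rw [ENNReal.div_lt_iff (by norm_num) (by norm_num)]; norm_num))
  obtain ⟨r, ⟨hr1, hr2⟩, hr0⟩ := ((h1.and h2).and self_mem_nhdsWithin).exists
  replace hr0 : 0 < r := hr0
  -- find s ∈ E with r/2 ≤ |s - t| ≤ r
  obtain ⟨s, hsE, hscb, hsd⟩ : ∃ s ∈ E, s ∈ closedBall t r ∧ r/2 ≤ |s - t| := by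
    by_contra h
    push_neg at h
    have hsub : E ∩ closedBall t r ⊆ ball t (r/2) := by
      intro y ⟨hy1, hy2⟩
      rcases h y hy1 hy2 with hlt
      simpa [Real.dist_eq, mem_ball] using hlt
    have hub : volume (E ∩ closedBall t r) ≤ ENNReal.ofReal r := by
      refine (measure_mono hsub).trans_eq ?_
      rw [Real.volume_ball]; ring_nf
    have hratio : volume (E ∩ closedBall t r) / volume (closedBall t r) ≤ 2⁻¹ := by
      rw [Real.volume_closedBall]
      rw [ENNReal.div_le_iff (by simp [ENNReal.ofReal_pos]; linarith) (by exact ENNReal.ofReal_ne_top)]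
      refine hub.trans ?_
      rw [ENNReal.ofReal_mul (by norm_num : (0:ℝ) ≤ 2), ENNReal.ofReal_ofNat,
        ← mul_assoc, ENNReal.inv_mul_cancel (by norm_num) (by norm_num), one_mul]
    have hcon : (3/4 : ℝ≥0∞) < 2⁻¹ := hr2.trans_le hratio
    have h2' : (3/4 : ℝ≥0∞).toReal < (2⁻¹ : ℝ≥0∞).toReal :=
      ENNReal.toReal_strict_mono (by norm_num) hcon
    norm_num [ENNReal.toReal_div, ENNReal.toReal_inv] at h2'
  have hd : |s - t| ≤ r := by
    have := hscb
    simpa [Real.dist_eq, mem_closedBall] using this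
  -- the integral of g from t to s vanishes
  have hint : ∫ u in t..s, g u = 0 := by
    have h := intervalIntegral.integral_interval_sub_left (f := g) (μ := volume)
      (a := 0) (b := s) (c := t) ⟨hg.integrableOn, hg.integrableOn⟩
      ⟨hg.integrableOn, hg.integrableOn⟩
    rw [hE s hsE, hE t htE] at h
    simpa using h.symm
  have hInt2 : IntegrableOn (fun y => g y - g t) (closedBall t r) volume :=
    hg.integrableOn.sub (integrableOn_const
      (by rw [Real.volume_closedBall]; exact ENNReal.ofReal_ne_top))
  have hsub2 : Set.uIoc t s ⊆ closedBall t r := by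
    intro y hy
    rw [Set.mem_uIoc] at hy
    rw [mem_closedBall, Real.dist_eq]
    have h1 : |y - t| ≤ |s - t| := by
      rcases hy with ⟨ha, hb⟩ | ⟨ha, hb⟩
      · rw [abs_of_pos (by linarith)]
        have := le_abs_self (s - t); linarith
      · rw [abs_of_nonpos (by linarith)]
        have := neg_abs_le (s - t); linarith
    linarith
  have est1 : ‖∫ u in t..s, (g u - g t)‖ ≤ ∫ y in closedBall t r, ‖g y - g t‖ := by
    refine intervalIntegral.norm_integral_le_integral_norm_uIoc.trans ?_
    refine setIntegral_mono_set hInt2.norm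
      (Eventually.of_forall fun y => norm_nonneg _) (HasSubset.Subset.eventuallyLE hsub2)
  have hvol : (volume (closedBall t r)).toReal = 2*r := by
    rw [Real.volume_closedBall, ENNReal.toReal_ofReal (by linarith)]
  have est2 : ∫ y in closedBall t r, ‖g y - g t‖ ≤ 2*r*(c/8) := by
    have hpos : (volume (closedBall t r)).toReal = 2*r := hvol
    have : ∫ y in closedBall t r, ‖g y - g t‖
        = (2*r) * ⨍ y in closedBall t r, ‖g y - g t‖ := by
      rw [setAverage_eq, measureReal_def, hpos, smul_eq_mul, ← mul_assoc, mul_inv_cancel₀ (by linarith), one_mul]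
    rw [this]
    have h8 : (0:ℝ) ≤ 2*r := by linarith
    exact mul_le_mul_of_nonneg_left hr1.le h8
  have eq3 : ∫ u in t..s, (g u - g t) = -((s - t) * g t) := by
    rw [intervalIntegral.integral_sub (⟨hg.integrableOn, hg.integrableOn⟩ : IntervalIntegrable g volume t s) intervalIntegrable_const,
      hint, intervalIntegral.integral_const, zero_sub, smul_eq_mul]
  rw [eq3, norm_neg] at est1
  have : |s - t| * c ≤ 2*r*(c/8) := by
    calc |s - t| * c = ‖(s - t) * g t‖ := by rw [norm_mul]; simp [Real.norm_eq_abs, hcdef]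
    _ ≤ _ := est1.trans est2
  nlinarith [mul_le_mul_of_nonneg_right hsd hc.le]

/-- An element of the Cameron–Martin space `H`: an absolutely continuous function on
`[0,T]` with square-integrable a.e. derivative. -/
structure CameronMartin (T : ℝ) where
  toFun : ℝ → ℝ
  deriv : ℝ → ℝ
  intInt : IntervalIntegrable deriv MeasureTheory.volume 0 T
  memL2 : MeasureTheory.MemLp deriv 2 (MeasureTheory.volume.restrict (Set.Icc 0 T))
  ftc : ∀ t ∈ Set.Icc 0 T, toFun t = toFun 0 + ∫ s in (0:ℝ)..t, deriv s

/-- The minimal-energy control `h₀` with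
`h₀'(t) = ((φ'(t) − βφ(t))/(σφ(t)^γ))·1_{φ(t)≠0}`: it belongs to `H`, steers the ODE
along `φ`, its energy equals `I_T(φ)`, and every other admissible control has at least
this energy; hence `I_T(φ)` is the minimum of `(1/2)∫ h'²` over admissible controls. -/
theorem minimal_control_realizes_rate_function
    (σ β γ T : ℝ) (hσ : 0 < σ) (hγ : γ ∈ Set.Ico (1/2 : ℝ) 1) (hT : 0 < T)
    (φ φ' : ℝ → ℝ)
    (hφint : IntervalIntegrable φ' volume 0 T)
    (hφftc : ∀ t ∈ Set.Icc 0 T, φ t = ∫ s in (0:ℝ)..t, φ' s)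
    (hφnn : ∀ t ∈ Set.Icc 0 T, 0 ≤ φ t)
    (hfin : IntegrableOn
      (fun t => if φ t = 0 then 0 else ((φ' t - β * φ t) / φ t ^ γ)^2) (Set.Icc 0 T))
    (h0' : ℝ → ℝ)
    (hh0' : ∀ t, h0' t = if φ t = 0 then 0 else (φ' t - β * φ t) / (σ * φ t ^ γ)) :
    -- (i) h₀ ∈ H
    (MemLp h0' 2 (volume.restrict (Set.Icc 0 T)) ∧
      IntervalIntegrable h0' volume 0 T) ∧
    -- (ii) φ solves the controlled ODE with control h₀
    (∀ᵐ t ∂(volume.restrict (Set.Icc 0 T)),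
      φ' t = β * φ t + σ * φ t ^ γ * h0' t) ∧
    -- (iii) the energy of h₀ equals I_T(φ)
    ((1/2) * ∫ t in Set.Icc 0 T, (h0' t)^2 =
      (1/(2*σ^2)) * ∫ t in Set.Icc 0 T,
        (if φ t = 0 then 0 else ((φ' t - β * φ t) / φ t ^ γ)^2)) ∧
    -- (iv) any other admissible control has at least this energy
    (∀ h : CameronMartin T,
      (∀ᵐ t ∂(volume.restrict (Set.Icc 0 T)),
        φ' t = β * φ t + σ * φ t ^ γ * h.deriv t) →
      (1/(2*σ^2)) * (∫ t in Set.Icc 0 T,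
          (if φ t = 0 then 0 else ((φ' t - β * φ t) / φ t ^ γ)^2)) ≤
        (1/2) * ∫ t in Set.Icc 0 T, (h.deriv t)^2) := by
  have hσ2 : σ ≠ 0 := hσ.ne'
  have hσsq : σ^2 ≠ 0 := pow_ne_zero 2 hσ2
  set f : ℝ → ℝ := fun t => if φ t = 0 then 0 else ((φ' t - β * φ t) / φ t ^ γ)^2 with hfdef
  have hφ'Icc : IntegrableOn φ' (Icc 0 T) volume :=
    (intervalIntegrable_iff_integrableOn_Icc_of_le hT.le).mp hφint
  -- pointwise identity of squares
  have hsq : ∀ t, (h0' t)^2 = (σ^2)⁻¹ * f t := by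
    intro t
    rw [hh0']
    simp only [hfdef]
    split_ifs with h
    · simp
    · rw [div_pow, mul_pow, ← div_div]
      ring
  have hsqint : Integrable (fun t => (h0' t)^2) (volume.restrict (Icc 0 T)) := by
    rw [show (fun t => (h0' t)^2) = fun t => (σ^2)⁻¹ * f t from funext hsq]
    exact hfin.const_mul _
  -- the primitive F of the indicator extension g of φ'
  set g : ℝ → ℝ := (Icc (0:ℝ) T).indicator φ' with hgdef
  have hg : Integrable g volume := by
    rw [hgdef]
    exact (integrable_indicator_iff measurableSet_Icc).mpr hφ'Icc
  set F : ℝ → ℝ := fun t => ∫ s in (0:ℝ)..t, g s with hFdef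
  have hFcont : Continuous F :=
    intervalIntegral.continuous_primitive (fun a b => hg.intervalIntegrable) 0
  have hφF : ∀ t ∈ Icc (0:ℝ) T, φ t = F t := by
    intro t ht
    rw [hφftc t ht, hFdef]
    refine intervalIntegral.integral_congr fun s hs => ?_
    rw [uIcc_of_le ht.1] at hs
    rw [hgdef, indicator_of_mem (Icc_subset_Icc le_rfl ht.2 hs)]
  set E : Set ℝ := Icc 0 T ∩ {t | F t = 0} with hEdef
  have hEmeas : MeasurableSet E :=
    measurableSet_Icc.inter (measurableSet_eq_fun hFcont.measurable measurable_const)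
  have hkey := ae_zero_on_zero_set g hg E hEmeas (fun s hs => hs.2)
  -- a.e. on the zero set of φ, φ' vanishes
  have hzero : ∀ᵐ t ∂(volume.restrict (Icc 0 T)), φ t = 0 → φ' t = 0 := by
    rw [ae_iff] at hkey ⊢
    rw [Measure.restrict_apply' hEmeas] at hkey
    rw [Measure.restrict_apply' measurableSet_Icc]
    refine measure_mono_null ?_ hkey
    rintro t ⟨ht1, ht2⟩
    simp only [mem_setOf_eq] at ht1
    push_neg at ht1
    obtain ⟨hφ0, hφ'0⟩ := ht1
    refine ⟨?_, ht2, ?_⟩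
    · simp only [mem_setOf_eq, hgdef, indicator_of_mem ht2]
      exact hφ'0
    · rw [mem_setOf_eq, ← hφF t ht2, hφ0]
  -- measurability of h0'
  have hφ'm : AEStronglyMeasurable φ' (volume.restrict (Icc 0 T)) :=
    hφ'Icc.aestronglyMeasurable
  have hGm : Measurable (fun t => if F t = 0 then 0
      else (hφ'm.mk φ' t - β * F t) / (σ * F t ^ γ)) := by
    refine Measurable.ite (measurableSet_eq_fun hFcont.measurable measurable_const)
      measurable_const ?_
    exact (hφ'm.stronglyMeasurable_mk.measurable.sub
        (hFcont.measurable.const_mul β)).div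
      ((hFcont.measurable.pow measurable_const).const_mul σ)
  have h0'm : AEStronglyMeasurable h0' (volume.restrict (Icc 0 T)) := by
    refine hGm.aestronglyMeasurable.congr ?_
    filter_upwards [hφ'm.ae_eq_mk, ae_restrict_mem measurableSet_Icc] with t hψt htIcc
    rw [hh0', hφF t htIcc, hψt]
  have hmem2 : MemLp h0' 2 (volume.restrict (Icc 0 T)) :=
    (memLp_two_iff_integrable_sq h0'm).mpr hsqint
  have : IsFiniteMeasure (volume.restrict (Icc (0:ℝ) T)) := by
    constructor
    rw [Measure.restrict_apply_univ]
    exact measure_Icc_lt_top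
  have hII : IntervalIntegrable h0' volume 0 T := by
    rw [intervalIntegrable_iff_integrableOn_Icc_of_le hT.le]
    exact hmem2.integrable one_le_two
  -- (ii)
  have hii : ∀ᵐ t ∂(volume.restrict (Icc 0 T)),
      φ' t = β * φ t + σ * φ t ^ γ * h0' t := by
    filter_upwards [hzero, ae_restrict_mem measurableSet_Icc] with t h0 htIcc
    by_cases hcase : φ t = 0
    · rw [hh0', if_pos hcase, hcase, h0 hcase]
      simp
    · have hpos : 0 < φ t := lt_of_le_of_ne (hφnn t htIcc) (Ne.symm hcase)
      have hb : (0:ℝ) < φ t ^ γ := Real.rpow_pos_of_pos hpos γ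
      have h1 : σ * φ t ^ γ ≠ 0 := by positivity
      rw [hh0', if_neg hcase, mul_comm (σ * φ t ^ γ), div_mul_cancel₀ _ h1]
      ring
  -- (iii)
  have hiii : (1/2) * ∫ t in Icc (0:ℝ) T, (h0' t)^2
      = (1/(2*σ^2)) * ∫ t in Icc (0:ℝ) T, f t := by
    have h1 : ∫ t in Icc (0:ℝ) T, (h0' t)^2 = (σ^2)⁻¹ * ∫ t in Icc (0:ℝ) T, f t := by
      simp_rw [hsq]
      exact integral_const_mul _ _
    rw [h1]
    field_simp
  refine ⟨⟨hmem2, hII⟩, hii, hiii, ?_⟩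
  -- (iv)
  intro h hadm
  have hder2 : Integrable (fun t => (h.deriv t)^2) (volume.restrict (Icc 0 T)) :=
    (memLp_two_iff_integrable_sq h.memL2.aestronglyMeasurable).mp h.memL2
  have hle : ∀ᵐ t ∂(volume.restrict (Icc 0 T)), (h0' t)^2 ≤ (h.deriv t)^2 := by
    filter_upwards [hadm, ae_restrict_mem measurableSet_Icc] with t ht htIcc
    by_cases hcase : φ t = 0
    · rw [hh0', if_pos hcase]
      simpa using sq_nonneg (h.deriv t)
    · have hpos : 0 < φ t := lt_of_le_of_ne (hφnn t htIcc) (Ne.symm hcase)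
      have hb : (0:ℝ) < φ t ^ γ := Real.rpow_pos_of_pos hpos γ
      have h1 : σ * φ t ^ γ ≠ 0 := by positivity
      have heq : h0' t = h.deriv t := by
        rw [hh0', if_neg hcase, ht]
        field_simp
        ring
      rw [heq]
  have hmono := integral_mono_ae hsqint hder2 hle
  rw [← hiii]
  exact mul_le_mul_of_nonneg_left hmono (by norm_num)
end

section
/- Let φ : [0,T] → [0,∞) be absolutely continuous with φ(0) = 0 and I_T(φ) < ∞. Then ψ := φ^{1−γ} (i.e. ψ(t) = φ(t)^{1−γ}) is absolutely continuous on [0,T] with ψ(0) = 0, its a.e. derivative satisfies ψ'(t) = (1−γ) φ'(t) φ(t)^{−γ} · 1_{φ(t)>0} for a.e. t ∈ [0,T], and (1/(2σ²(1−γ)²)) ∫₀ᵀ ( ψ'(t) − β(1−γ)ψ(t) )² dt = I_T(φ). -/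
open MeasureTheory Set

open Filter Topology

set_option maxHeartbeats 1000000

lemma rpow_abs_sub_le {p c a b : ℝ} (hp : p ≤ 1) (hc : 0 < c)
    (ha : c ≤ a) (hb : c ≤ b) :
    |a ^ p - b ^ p| ≤ |p| * c ^ (p - 1) * |a - b| := by
  have key : ∀ x ∈ Set.Ici c, HasDerivWithinAt (fun x : ℝ => x ^ p) (p * x ^ (p - 1)) (Set.Ici c) x :=
    fun x hx =>
      (Real.hasDerivAt_rpow_const (Or.inl (ne_of_gt (lt_of_lt_of_le hc hx)))).hasDerivWithinAt
  have bound : ∀ x ∈ Set.Ici c, ‖p * x ^ (p - 1)‖ ≤ |p| * c ^ (p - 1) := by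
    intro x hx
    rw [norm_mul, Real.norm_eq_abs, Real.norm_eq_abs,
      abs_of_nonneg (Real.rpow_nonneg (le_trans hc.le hx) _)]
    have : x ^ (p - 1) ≤ c ^ (p - 1) :=
      Real.rpow_le_rpow_of_nonpos hc hx (by linarith)
    exact mul_le_mul_of_nonneg_left this (abs_nonneg p)
  have := Convex.norm_image_sub_le_of_norm_hasDerivWithin_le key bound (convex_Ici c) hb ha
  simpa [Real.norm_eq_abs] using this

lemma ftc_rpow_shift {T γ : ℝ} (hγ0 : 0 < γ) (hγ1 : γ < 1)
    (f : ℝ → ℝ) (hf : Integrable f volume)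
    (u : ℝ → ℝ) (hu : ∀ t, u t = ∫ s in (0:ℝ)..t, f s)
    (hun : ∀ t ∈ Icc 0 T, 0 ≤ u t)
    {ε : ℝ} (hε : 0 < ε) {t : ℝ} (ht : t ∈ Icc 0 T) :
    (u t + ε) ^ (1 - γ) - ε ^ (1 - γ)
      = ∫ s in (0:ℝ)..t, (1 - γ) * (u s + ε) ^ (-γ) * f s := by
  have h1γ : (0:ℝ) < 1 - γ := by linarith
  set c : ℝ := ε / 2 with hcdef
  have hc : 0 < c := by positivity
  have hucont : Continuous u := by
    have h := hf.continuous_primitive 0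
    rwa [show (fun b => ∫ x in (0:ℝ)..b, f x) = u from (funext fun s => (hu s).symm)] at h
  set C : ℝ := ∫ x, |f x| with hC
  have hC0 : 0 ≤ C := integral_nonneg fun x => abs_nonneg _
  set K : ℝ := |1 - γ| * c ^ (1 - γ - 1) + (1 - γ) * c ^ (-γ)
      + (1 - γ) * (|-γ| * c ^ (-γ - 1)) * C + 1 with hK
  have hK1 : 0 < K := by
    have h1 : 0 ≤ |1 - γ| * c ^ (1 - γ - 1) := by positivity
    have h2 : 0 ≤ (1 - γ) * c ^ (-γ) := by positivity
    have h3 : 0 ≤ (1 - γ) * (|-γ| * c ^ (-γ - 1)) * C := by positivity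
    linarith
  set X : ℝ := ((u t + ε) ^ (1 - γ) - ε ^ (1 - γ))
      - ∫ s in (0:ℝ)..t, (1 - γ) * (u s + ε) ^ (-γ) * f s with hX
  suffices h : ∀ η : ℝ, 0 < η → |X| ≤ η by
    have h0 : |X| ≤ 0 := by
      by_contra hlt
      push_neg at hlt
      have := h (|X| / 2) (by linarith)
      linarith
    have := abs_nonpos_iff.mp h0
    rw [hX] at this
    linarith [this]
  intro η hη
  set δ : ℝ := min (ε / 4) (η / K) with hδdef
  have hδ0 : 0 < δ := lt_min (by positivity) (by positivity)
  have hδε : δ ≤ ε / 4 := min_le_left _ _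
  have hδη : δ * K ≤ η := by
    rw [mul_comm]
    calc K * δ ≤ K * (η / K) := by
          exact mul_le_mul_of_nonneg_left (min_le_right _ _) hK1.le
      _ = η := by field_simp
  obtain ⟨g, gsupp, hgapprox, gcont, gint⟩ := hf.exists_hasCompactSupport_integral_sub_le hδ0
  set v : ℝ → ℝ := fun s => ∫ x in (0:ℝ)..s, g x with hvdef
  have hvd : ∀ s, HasDerivAt v (g s) s := fun s =>
    intervalIntegral.integral_hasDerivAt_right gint.intervalIntegrable
      gcont.stronglyMeasurable.stronglyMeasurableAtFilter gcont.continuousAt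
  have hvcont : Continuous v := continuous_iff_continuousAt.mpr fun s => (hvd s).continuousAt
  have hgf : ∫ x, |g x - f x| ≤ δ := by
    calc ∫ x, |g x - f x| = ∫ x, ‖f x - g x‖ := by
          congr 1; funext x; rw [Real.norm_eq_abs, abs_sub_comm]
      _ ≤ δ := hgapprox
  have hgfint : Integrable (fun x => g x - f x) volume := gint.sub hf
  have hvu : ∀ s ∈ Icc 0 T, |v s - u s| ≤ δ := by
    intro s hs
    have h0s : (0:ℝ) ≤ s := hs.1
    have heq : v s - u s = ∫ x in (0:ℝ)..s, (g x - f x) := by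
      rw [hu, hvdef]
      exact (intervalIntegral.integral_sub gint.intervalIntegrable hf.intervalIntegrable).symm
    rw [heq]
    calc |∫ x in (0:ℝ)..s, (g x - f x)| ≤ ∫ x in (0:ℝ)..s, |g x - f x| :=
          intervalIntegral.abs_integral_le_integral_abs h0s
      _ = ∫ x in Ioc (0:ℝ) s, |g x - f x| := intervalIntegral.integral_of_le h0s
      _ ≤ ∫ x, |g x - f x| :=
          setIntegral_le_integral hgfint.abs (ae_of_all _ fun x => abs_nonneg _)
      _ ≤ δ := hgf
  have hvlb : ∀ s ∈ Icc 0 T, c ≤ v s + ε := by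
    intro s hs
    have h1 := abs_le.mp (hvu s hs)
    have h2 := hun s hs
    rw [hcdef]; linarith [h1.1]
  have hulb : ∀ s ∈ Icc 0 T, c ≤ u s + ε := by
    intro s hs
    have h2 := hun s hs
    rw [hcdef]; linarith
  have h0t : (0:ℝ) ≤ t := ht.1
  have hsubset : Set.uIcc (0:ℝ) t ⊆ Icc 0 T := by
    rw [uIcc_of_le h0t]; exact Icc_subset_Icc le_rfl ht.2
  -- FTC for v
  have hH : ∀ s ∈ uIcc (0:ℝ) t,
      HasDerivAt (fun s => (v s + ε) ^ (1 - γ)) ((1 - γ) * (v s + ε) ^ (-γ) * g s) s := by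
    intro s hs
    have hpos : 0 < v s + ε := lt_of_lt_of_le hc (hvlb s (hsubset hs))
    have inner : HasDerivAt (fun s => v s + ε) (g s) s := (hvd s).add_const ε
    have outer : HasDerivAt (fun x : ℝ => x ^ (1 - γ))
        ((1 - γ) * (v s + ε) ^ (1 - γ - 1)) (v s + ε) :=
      Real.hasDerivAt_rpow_const (Or.inl (ne_of_gt hpos))
    have hcomp := outer.comp s inner
    rw [show (1 - γ - 1 : ℝ) = -γ by ring] at hcomp
    exact hcomp
  have hvpowcont : ContinuousOn (fun s => (v s + ε) ^ (-γ)) (uIcc (0:ℝ) t) := by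
    intro s hs
    have hpos : 0 < v s + ε := lt_of_lt_of_le hc (hvlb s (hsubset hs))
    exact ((hvcont.continuousAt.add continuousAt_const).rpow_const
      (Or.inl (ne_of_gt hpos))).continuousWithinAt
  have hintg : IntervalIntegrable (fun s => (1 - γ) * (v s + ε) ^ (-γ) * g s) volume 0 t :=
    ((continuousOn_const.mul hvpowcont).mul gcont.continuousOn).intervalIntegrable
  have hftc := intervalIntegral.integral_eq_sub_of_hasDerivAt hH hintg
  have hv0 : v 0 = 0 := intervalIntegral.integral_same
  rw [hv0, zero_add] at hftc
  -- integrability of the target integrand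
  have hupowcont : ContinuousOn (fun s => (1 - γ) * (u s + ε) ^ (-γ)) (uIcc (0:ℝ) t) := by
    apply continuousOn_const.mul
    intro s hs
    have hpos : 0 < u s + ε := lt_of_lt_of_le hc (hulb s (hsubset hs))
    exact ((hucont.continuousAt.add continuousAt_const).rpow_const
      (Or.inl (ne_of_gt hpos))).continuousWithinAt
  have hinth : IntervalIntegrable (fun s => (1 - γ) * (u s + ε) ^ (-γ) * f s) volume 0 t := by
    have := (hf.intervalIntegrable (a := 0) (b := t)).continuousOn_mul hupowcont
    simpa [mul_assoc] using this
  -- pointwise bound on the difference of integrands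
  have hptwise : ∀ s ∈ Icc (0:ℝ) t,
      |(1 - γ) * (v s + ε) ^ (-γ) * g s - (1 - γ) * (u s + ε) ^ (-γ) * f s|
        ≤ (1 - γ) * c ^ (-γ) * |g s - f s|
          + (1 - γ) * (|-γ| * c ^ (-γ - 1)) * δ * |f s| := by
    intro s hs
    have hsT : s ∈ Icc 0 T := Icc_subset_Icc le_rfl ht.2 hs
    have hv1 : c ≤ v s + ε := hvlb s hsT
    have hu1 : c ≤ u s + ε := hulb s hsT
    have hvpow_le : (v s + ε) ^ (-γ) ≤ c ^ (-γ) :=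
      Real.rpow_le_rpow_of_nonpos hc hv1 (by linarith)
    have hvpow_nn : 0 ≤ (v s + ε) ^ (-γ) := Real.rpow_nonneg (by linarith) _
    have hdiffpow : |(v s + ε) ^ (-γ) - (u s + ε) ^ (-γ)| ≤ |-γ| * c ^ (-γ - 1) * δ := by
      have h := rpow_abs_sub_le (p := -γ) (by linarith) hc hv1 hu1
      calc |(v s + ε) ^ (-γ) - (u s + ε) ^ (-γ)|
          ≤ |-γ| * c ^ (-γ - 1) * |v s + ε - (u s + ε)| := h
        _ = |-γ| * c ^ (-γ - 1) * |v s - u s| := by ring_nf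
        _ ≤ |-γ| * c ^ (-γ - 1) * δ := by
            apply mul_le_mul_of_nonneg_left (hvu s hsT) (by positivity)
    have key : (1 - γ) * (v s + ε) ^ (-γ) * g s - (1 - γ) * (u s + ε) ^ (-γ) * f s
        = (1 - γ) * ((v s + ε) ^ (-γ) * (g s - f s)
            + ((v s + ε) ^ (-γ) - (u s + ε) ^ (-γ)) * f s) := by ring
    rw [key, abs_mul, abs_of_pos h1γ]
    calc (1 - γ) * |(v s + ε) ^ (-γ) * (g s - f s)
            + ((v s + ε) ^ (-γ) - (u s + ε) ^ (-γ)) * f s|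
        ≤ (1 - γ) * ((v s + ε) ^ (-γ) * |g s - f s|
            + (|-γ| * c ^ (-γ - 1) * δ) * |f s|) := by
          apply mul_le_mul_of_nonneg_left _ h1γ.le
          calc |(v s + ε) ^ (-γ) * (g s - f s)
                + ((v s + ε) ^ (-γ) - (u s + ε) ^ (-γ)) * f s|
              ≤ |(v s + ε) ^ (-γ) * (g s - f s)|
                + |((v s + ε) ^ (-γ) - (u s + ε) ^ (-γ)) * f s| := abs_add_le _ _
            _ = (v s + ε) ^ (-γ) * |g s - f s|
                + |(v s + ε) ^ (-γ) - (u s + ε) ^ (-γ)| * |f s| := by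
                rw [abs_mul, abs_mul, abs_of_nonneg hvpow_nn]
            _ ≤ (v s + ε) ^ (-γ) * |g s - f s|
                + (|-γ| * c ^ (-γ - 1) * δ) * |f s| := by
                have := mul_le_mul_of_nonneg_right hdiffpow (abs_nonneg (f s))
                linarith
      _ ≤ (1 - γ) * (c ^ (-γ) * |g s - f s| + (|-γ| * c ^ (-γ - 1) * δ) * |f s|) := by
          apply mul_le_mul_of_nonneg_left _ h1γ.le
          have := mul_le_mul_of_nonneg_right hvpow_le (abs_nonneg (g s - f s))
          linarith
      _ = (1 - γ) * c ^ (-γ) * |g s - f s|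
          + (1 - γ) * (|-γ| * c ^ (-γ - 1)) * δ * |f s| := by ring
  -- integral bounds
  have habs1 : ∫ x in (0:ℝ)..t, |g x - f x| ≤ δ := by
    calc ∫ x in (0:ℝ)..t, |g x - f x| = ∫ x in Ioc (0:ℝ) t, |g x - f x| :=
          intervalIntegral.integral_of_le h0t
      _ ≤ ∫ x, |g x - f x| :=
          setIntegral_le_integral hgfint.abs (ae_of_all _ fun x => abs_nonneg _)
      _ ≤ δ := hgf
  have habs2 : ∫ x in (0:ℝ)..t, |f x| ≤ C := by
    calc ∫ x in (0:ℝ)..t, |f x| = ∫ x in Ioc (0:ℝ) t, |f x| :=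
          intervalIntegral.integral_of_le h0t
      _ ≤ ∫ x, |f x| :=
          setIntegral_le_integral hf.abs (ae_of_all _ fun x => abs_nonneg _)
  -- E2
  have hE2 : |(∫ s in (0:ℝ)..t, (1 - γ) * (v s + ε) ^ (-γ) * g s)
      - ∫ s in (0:ℝ)..t, (1 - γ) * (u s + ε) ^ (-γ) * f s|
      ≤ (1 - γ) * c ^ (-γ) * δ + (1 - γ) * (|-γ| * c ^ (-γ - 1)) * δ * C := by
    rw [← intervalIntegral.integral_sub hintg hinth]
    calc |∫ s in (0:ℝ)..t, ((1 - γ) * (v s + ε) ^ (-γ) * g s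
            - (1 - γ) * (u s + ε) ^ (-γ) * f s)|
        ≤ ∫ s in (0:ℝ)..t, |(1 - γ) * (v s + ε) ^ (-γ) * g s
            - (1 - γ) * (u s + ε) ^ (-γ) * f s| :=
          intervalIntegral.abs_integral_le_integral_abs h0t
      _ ≤ ∫ s in (0:ℝ)..t, ((1 - γ) * c ^ (-γ) * |g s - f s|
            + (1 - γ) * (|-γ| * c ^ (-γ - 1)) * δ * |f s|) := by
          have i1 : IntervalIntegrable (fun s => |g s - f s|) volume 0 t :=
            hgfint.intervalIntegrable.abs
          have i2 : IntervalIntegrable (fun s => |f s|) volume 0 t :=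
            hf.intervalIntegrable.abs
          exact intervalIntegral.integral_mono_on h0t ((hintg.sub hinth).abs)
            ((i1.const_mul _).add (i2.const_mul _)) hptwise
      _ = (1 - γ) * c ^ (-γ) * (∫ s in (0:ℝ)..t, |g s - f s|)
          + (1 - γ) * (|-γ| * c ^ (-γ - 1)) * δ * ∫ s in (0:ℝ)..t, |f s| := by
          have i1 : IntervalIntegrable (fun s => |g s - f s|) volume 0 t :=
            hgfint.intervalIntegrable.abs
          have i2 : IntervalIntegrable (fun s => |f s|) volume 0 t :=
            hf.intervalIntegrable.abs
          rw [intervalIntegral.integral_add (i1.const_mul _) (i2.const_mul _),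
            intervalIntegral.integral_const_mul, intervalIntegral.integral_const_mul]
      _ ≤ (1 - γ) * c ^ (-γ) * δ + (1 - γ) * (|-γ| * c ^ (-γ - 1)) * δ * C := by
          have h1 : 0 ≤ (1 - γ) * c ^ (-γ) := by positivity
          have h2 : 0 ≤ (1 - γ) * (|-γ| * c ^ (-γ - 1)) * δ := by positivity
          have := mul_le_mul_of_nonneg_left habs1 h1
          have := mul_le_mul_of_nonneg_left habs2 h2
          nlinarith
  -- E1
  have hE1 : |(u t + ε) ^ (1 - γ) - (v t + ε) ^ (1 - γ)|
      ≤ |1 - γ| * c ^ (1 - γ - 1) * δ := by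
    have h := rpow_abs_sub_le (p := 1 - γ) (by linarith) hc (hulb t ht) (hvlb t ht)
    calc |(u t + ε) ^ (1 - γ) - (v t + ε) ^ (1 - γ)|
        ≤ |1 - γ| * c ^ (1 - γ - 1) * |u t + ε - (v t + ε)| := h
      _ = |1 - γ| * c ^ (1 - γ - 1) * |v t - u t| := by
          rw [show u t + ε - (v t + ε) = -(v t - u t) by ring, abs_neg]
      _ ≤ |1 - γ| * c ^ (1 - γ - 1) * δ := by
          apply mul_le_mul_of_nonneg_left (hvu t ht) (by positivity)
  -- combine
  have hXeq : X = ((u t + ε) ^ (1 - γ) - (v t + ε) ^ (1 - γ))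
      + ((∫ s in (0:ℝ)..t, (1 - γ) * (v s + ε) ^ (-γ) * g s)
          - ∫ s in (0:ℝ)..t, (1 - γ) * (u s + ε) ^ (-γ) * f s) := by
    rw [hX, hftc]; ring
  calc |X| ≤ |(u t + ε) ^ (1 - γ) - (v t + ε) ^ (1 - γ)|
        + |(∫ s in (0:ℝ)..t, (1 - γ) * (v s + ε) ^ (-γ) * g s)
          - ∫ s in (0:ℝ)..t, (1 - γ) * (u s + ε) ^ (-γ) * f s| := by
        rw [hXeq]; exact abs_add_le _ _
    _ ≤ |1 - γ| * c ^ (1 - γ - 1) * δ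
        + ((1 - γ) * c ^ (-γ) * δ + (1 - γ) * (|-γ| * c ^ (-γ - 1)) * δ * C) := by
        linarith
    _ ≤ δ * K := by rw [hK]; ring_nf; nlinarith [hδ0.le]
    _ ≤ η := hδη
lemma ae_zero_on_zero_set_s7 {T : ℝ} (f : ℝ → ℝ) (hf : Integrable f volume)
    (u : ℝ → ℝ) (hu : ∀ t, u t = ∫ s in (0:ℝ)..t, f s)
    (hun : ∀ t ∈ Icc 0 T, 0 ≤ u t) :
    ∀ᵐ x, x ∈ Ioo (0:ℝ) T → u x = 0 → f x = 0 := by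
  filter_upwards [(Besicovitch.vitaliFamily (volume : Measure ℝ)).ae_tendsto_average_norm_sub
    hf.locallyIntegrable] with x hx hxI hux
  have havg : Tendsto (fun r : ℝ => ⨍ y in Metric.closedBall x r, ‖f y - f x‖) (𝓝[>] 0) (𝓝 0) :=
    hx.comp (Besicovitch.tendsto_filterAt volume x)
  have main : ∀ r : ℝ, 0 < r → ∀ a b : ℝ, b - a = r → Ioc a b ⊆ Metric.closedBall x r →
      |(∫ y in a..b, f y) / r - f x| ≤ 2 * ⨍ y in Metric.closedBall x r, ‖f y - f x‖ := by
    intro r hr a b hab hsub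
    have hale : a ≤ b := by linarith
    have hint1 : IntervalIntegrable f volume a b := hf.intervalIntegrable
    have hcbint : IntegrableOn (fun y => ‖f y - f x‖) (Metric.closedBall x r) volume :=
      (hf.integrableOn.sub (integrableOn_const
        measure_closedBall_lt_top.ne)).norm
    have heq : (∫ y in a..b, f y) / r - f x = (∫ y in a..b, (f y - f x)) / r := by
      rw [intervalIntegral.integral_sub hint1 intervalIntegrable_const,
        intervalIntegral.integral_const, hab, smul_eq_mul]
      field_simp
    rw [heq, abs_div, abs_of_pos hr]
    have h1 : |∫ y in a..b, (f y - f x)| ≤ ∫ y in Metric.closedBall x r, ‖f y - f x‖ := by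
      calc |∫ y in a..b, (f y - f x)| ≤ ∫ y in a..b, |f y - f x| :=
            intervalIntegral.abs_integral_le_integral_abs hale
        _ = ∫ y in Ioc a b, ‖f y - f x‖ := by
            rw [intervalIntegral.integral_of_le hale]
            simp [Real.norm_eq_abs]
        _ ≤ ∫ y in Metric.closedBall x r, ‖f y - f x‖ :=
            setIntegral_mono_set hcbint (ae_of_all _ fun y => norm_nonneg _)
              (HasSubset.Subset.eventuallyLE hsub)
    have hvol : (volume (Metric.closedBall x r)).toReal = 2 * r := by
      rw [Real.volume_closedBall, ENNReal.toReal_ofReal (by linarith)]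
    have havg_eq : ∫ y in Metric.closedBall x r, ‖f y - f x‖
        = 2 * r * ⨍ y in Metric.closedBall x r, ‖f y - f x‖ := by
      rw [setAverage_eq, measureReal_def, hvol, smul_eq_mul]
      field_simp
    rw [havg_eq] at h1
    calc |∫ y in a..b, (f y - f x)| / r
        ≤ (2 * r * ⨍ y in Metric.closedBall x r, ‖f y - f x‖) / r := by gcongr
      _ = 2 * ⨍ y in Metric.closedBall x r, ‖f y - f x‖ := by field_simp
  -- right difference quotients
  have hright : Tendsto (fun r : ℝ => (∫ y in x..(x + r), f y) / r) (𝓝[>] 0) (𝓝 (f x)) := by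
    rw [tendsto_iff_norm_sub_tendsto_zero]
    apply squeeze_zero' (Eventually.of_forall fun r => norm_nonneg _)
    · filter_upwards [self_mem_nhdsWithin] with r (hr : 0 < r)
      have := main r hr x (x + r) (by ring) (fun y hy => by
        simp only [Metric.mem_closedBall, Real.dist_eq]
        rw [abs_le]; constructor <;> [linarith [hy.1.le]; linarith [hy.2]])
      simpa [Real.norm_eq_abs] using this
    · have := havg.const_mul 2
      simpa using this
  have hleft : Tendsto (fun r : ℝ => (∫ y in (x - r)..x, f y) / r) (𝓝[>] 0) (𝓝 (f x)) := by
    rw [tendsto_iff_norm_sub_tendsto_zero]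
    apply squeeze_zero' (Eventually.of_forall fun r => norm_nonneg _)
    · filter_upwards [self_mem_nhdsWithin] with r (hr : 0 < r)
      have := main r hr (x - r) x (by ring) (fun y hy => by
        simp only [Metric.mem_closedBall, Real.dist_eq]
        rw [abs_le]; constructor <;> [linarith [hy.1.le]; linarith [hy.2]])
      simpa [Real.norm_eq_abs] using this
    · have := havg.const_mul 2
      simpa using this
  -- conclude nonnegativity and nonpositivity
  have hfx_nonneg : 0 ≤ f x := by
    refine ge_of_tendsto hright ?_
    filter_upwards [Ioo_mem_nhdsGT_of_mem ⟨le_rfl, sub_pos.mpr hxI.2⟩] with r hr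
    have hxr : x + r ∈ Icc (0:ℝ) T := ⟨by linarith [hxI.1, hr.1], by linarith [hr.2]⟩
    have hval : ∫ y in x..(x + r), f y = u (x + r) - u x := by
      rw [hu, hu]
      have h1 : IntervalIntegrable f volume 0 x := hf.intervalIntegrable
      have h2 : IntervalIntegrable f volume x (x + r) := hf.intervalIntegrable
      rw [eq_sub_iff_add_eq]
      rw [add_comm]
      exact intervalIntegral.integral_add_adjacent_intervals h1 h2
    rw [hval, hux, sub_zero]
    exact div_nonneg (hun _ hxr) hr.1.le
  have hfx_nonpos : f x ≤ 0 := by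
    refine le_of_tendsto hleft ?_
    filter_upwards [Ioo_mem_nhdsGT_of_mem ⟨le_rfl, hxI.1⟩] with r hr
    have hxr : x - r ∈ Icc (0:ℝ) T := ⟨by linarith [hr.2], by linarith [hxI.2, hr.1]⟩
    have hval : ∫ y in (x - r)..x, f y = u x - u (x - r) := by
      rw [hu, hu]
      have h1 : IntervalIntegrable f volume 0 (x - r) := hf.intervalIntegrable
      have h2 : IntervalIntegrable f volume (x - r) x := hf.intervalIntegrable
      rw [eq_sub_iff_add_eq, add_comm]
      exact intervalIntegral.integral_add_adjacent_intervals h1 h2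
    rw [hval, hux, zero_sub]
    have : 0 ≤ u (x - r) / r := div_nonneg (hun _ hxr) hr.1.le
    rw [neg_div]
    linarith
  linarith


/-- If `φ ≥ 0` is absolutely continuous with `φ(0)=0` and `I_T(φ) < ∞`,
then `ψ = φ^{1−γ}` is absolutely continuous with `ψ(0)=0`, a.e. derivative
`ψ' = (1−γ)φ'φ^{−γ}1_{φ>0}`, and
`(1/(2σ²(1−γ)²))∫₀ᵀ(ψ' − β(1−γ)ψ)² = I_T(φ)`. -/
theorem power_transform_of_finite_rate_path
    (σ β γ T : ℝ) (hσ : 0 < σ) (hγ : γ ∈ Set.Ico (1/2 : ℝ) 1) (hT : 0 < T)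
    (φ φ' : ℝ → ℝ)
    (hφint : IntervalIntegrable φ' volume 0 T)
    (hφftc : ∀ t ∈ Set.Icc 0 T, φ t = ∫ s in (0:ℝ)..t, φ' s)
    (hφnn : ∀ t ∈ Set.Icc 0 T, 0 ≤ φ t)
    (hfin : IntegrableOn
      (fun t => if φ t = 0 then 0 else ((φ' t - β * φ t) / φ t ^ γ)^2) (Set.Icc 0 T)) :
    (φ 0) ^ (1 - γ) = 0 ∧
    ∃ ψ' : ℝ → ℝ, IntervalIntegrable ψ' volume 0 T ∧
      (∀ t ∈ Set.Icc 0 T, φ t ^ (1 - γ) = ∫ s in (0:ℝ)..t, ψ' s) ∧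
      (∀ᵐ t ∂(volume.restrict (Set.Icc 0 T)),
        ψ' t = if 0 < φ t then (1 - γ) * φ' t * φ t ^ (-γ) else 0) ∧
      (1/(2*σ^2*(1-γ)^2)) * (∫ t in Set.Icc 0 T,
          (ψ' t - β*(1-γ) * φ t ^ (1-γ))^2) =
        (1/(2*σ^2)) * ∫ t in Set.Icc 0 T,
          (if φ t = 0 then 0 else ((φ' t - β * φ t) / φ t ^ γ)^2) := by
  obtain ⟨hγhalf, hγ1⟩ := hγ
  have hγ0 : 0 < γ := lt_of_lt_of_le (by norm_num) hγhalf
  have h1γ : 0 < 1 - γ := by linarith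
  have h1γne : (1 - γ) ≠ 0 := ne_of_gt h1γ
  have h0T : (0:ℝ) ∈ Icc (0:ℝ) T := ⟨le_rfl, hT.le⟩
  have hφ0 : φ 0 = 0 := by rw [hφftc 0 h0T, intervalIntegral.integral_same]
  have hφ'Icc : IntegrableOn φ' (Icc 0 T) volume := by
    rw [← intervalIntegrable_iff_integrableOn_Icc_of_le hT.le]
    exact hφint
  set f : ℝ → ℝ := (Icc 0 T).indicator φ' with hfdef
  have hf : Integrable f volume := (integrable_indicator_iff measurableSet_Icc).mpr hφ'Icc
  set u : ℝ → ℝ := fun t => ∫ s in (0:ℝ)..t, f s with hudef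
  have hu : ∀ t, u t = ∫ s in (0:ℝ)..t, f s := fun t => rfl
  have hufeq : ∀ t ∈ Icc (0:ℝ) T, u t = φ t := by
    intro t htm
    rw [hφftc t htm, hu]
    apply intervalIntegral.integral_congr
    intro s hs
    rw [uIcc_of_le htm.1] at hs
    exact indicator_of_mem (Icc_subset_Icc le_rfl htm.2 hs) φ'
  have hfeqIcc : ∀ t ∈ Icc (0:ℝ) T, f t = φ' t := fun t htm => indicator_of_mem htm φ'
  have hun : ∀ t ∈ Icc (0:ℝ) T, 0 ≤ u t := fun t htm => (hufeq t htm) ▸ hφnn t htm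
  have hucont : Continuous u := hf.continuous_primitive 0
  obtain ⟨M, hM⟩ := isCompact_Icc.exists_bound_of_continuousOn hucont.continuousOn
  have hM0 : 0 ≤ M := le_trans (norm_nonneg (u 0)) (hM 0 h0T)
  have huM : ∀ t ∈ Icc (0:ℝ) T, u t ≤ M := fun t htm =>
    le_trans (le_abs_self _) (hM t htm)
  -- the rate-function square root
  set q : ℝ → ℝ := fun s => if φ s = 0 then 0 else ((φ' s - β * φ s) / φ s ^ γ)^2 with hqdef
  have hq_nonneg : ∀ s, 0 ≤ q s := by
    intro s
    by_cases h : φ s = 0 <;> simp only [hqdef, if_pos, if_neg, h, ite_true, ite_false]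
    · exact le_rfl
    · positivity
  set r : ℝ → ℝ := fun s => Real.sqrt (q s) with hrdef
  have hr_nonneg : ∀ s, 0 ≤ r s := fun s => Real.sqrt_nonneg _
  have hr_meas : AEStronglyMeasurable r (volume.restrict (Icc 0 T)) :=
    Real.continuous_sqrt.comp_aestronglyMeasurable hfin.aestronglyMeasurable
  have hrsq : ∀ s, r s ^ 2 = q s := fun s => Real.sq_sqrt (hq_nonneg s)
  haveI : IsFiniteMeasure (volume.restrict (Icc (0:ℝ) T)) := ⟨by
    rw [Measure.restrict_apply_univ]; exact measure_Icc_lt_top⟩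
  have hr_int : IntegrableOn r (Icc 0 T) volume := by
    have hmem2 : MemLp r 2 (volume.restrict (Icc 0 T)) := by
      rw [memLp_two_iff_integrable_sq hr_meas]
      exact (integrable_congr (ae_of_all _ fun s => (hrsq s))).mpr hfin
    exact hmem2.integrable (by norm_num)
  set G : ℝ → ℝ := fun s => (1 - γ) * (r s + |β| * (M + 1)) with hGdef
  have hG_nonneg : ∀ s, 0 ≤ G s := by
    intro s
    have := hr_nonneg s
    have : (0:ℝ) ≤ r s + |β| * (M + 1) := by positivity
    positivity
  have hG_int : IntegrableOn G (Icc 0 T) volume :=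
    ((hr_int.add (integrableOn_const measure_Icc_lt_top.ne)).const_mul _)
  -- definition of ψ'
  set ψ' : ℝ → ℝ := fun s => if 0 < u s then (1 - γ) * φ' s * u s ^ (-γ) else 0 with hψdef
  have hψmeas : AEStronglyMeasurable ψ' (volume.restrict (Icc 0 T)) := by
    have h1 : AEStronglyMeasurable (fun s => (1 - γ) * φ' s * u s ^ (-γ))
        (volume.restrict (Icc 0 T)) :=
      (hφ'Icc.aestronglyMeasurable.const_mul _).mul
        ((hucont.measurable.pow measurable_const).aestronglyMeasurable)
    have hset : MeasurableSet {s : ℝ | 0 < u s} :=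
      measurableSet_lt measurable_const hucont.measurable
    have heq : ψ' = {s : ℝ | 0 < u s}.indicator (fun s => (1 - γ) * φ' s * u s ^ (-γ)) := by
      funext s
      by_cases h : 0 < u s <;> simp [hψdef, indicator, h]
    rw [heq]
    exact h1.indicator hset
  -- a.e. facts
  have haeZ : ∀ᵐ x, x ∈ Ioo (0:ℝ) T → u x = 0 → f x = 0 :=
    ae_zero_on_zero_set_s7 (T := T) f hf u hu hun
  have haeT : ∀ᵐ x : ℝ, x ≠ T := by
    refine ae_iff.mpr ?_
    have h1 : {a : ℝ | ¬a ≠ T} = {T} := by ext a; simp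
    rw [h1]
    exact measure_singleton T
  have hbound : ∀ᵐ x : ℝ, x ∈ Ioo (0:ℝ) T →
      (|ψ' x| ≤ G x ∧ ∀ ε : ℝ, 0 < ε → |(1 - γ) * (u x + ε) ^ (-γ) * f x| ≤ G x) := by
    filter_upwards [haeZ] with x hZ hxI
    have hxIcc : x ∈ Icc (0:ℝ) T := Ioo_subset_Icc_self hxI
    by_cases h0 : u x = 0
    · have hfx : f x = 0 := hZ hxI h0
      constructor
      · have : ψ' x = 0 := by simp [hψdef, h0]
        rw [this, abs_zero]; exact hG_nonneg x
      · intro ε hε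
        rw [hfx, mul_zero, abs_zero]; exact hG_nonneg x
    · have hupos : 0 < u x := (hun x hxIcc).lt_of_ne (Ne.symm h0)
      have hφx : φ x = u x := (hufeq x hxIcc).symm
      have hφpos : 0 < φ x := hφx ▸ hupos
      have hfx : f x = φ' x := hfeqIcc x hxIcc
      have hrx : r x = |φ' x - β * φ x| / φ x ^ γ := by
        rw [hrdef]
        simp only [hqdef, if_neg (ne_of_gt hφpos)]
        rw [Real.sqrt_sq_eq_abs, abs_div, abs_of_pos (Real.rpow_pos_of_pos hφpos γ)]
      have hpowpos : 0 < u x ^ γ := Real.rpow_pos_of_pos hupos γ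
      have hupow : u x ^ (-γ) = (u x ^ γ)⁻¹ := Real.rpow_neg hupos.le γ
      have core : u x ^ (-γ) * |φ' x| ≤ r x + |β| * (M + 1) := by
        have h1 : |φ' x| ≤ |φ' x - β * φ x| + |β| * φ x := by
          calc |φ' x| = |(φ' x - β * φ x) + β * φ x| := by ring_nf
            _ ≤ |φ' x - β * φ x| + |β * φ x| := abs_add_le _ _
            _ = |φ' x - β * φ x| + |β| * φ x := by
                rw [abs_mul, abs_of_pos hφpos]
        have h2 : u x ^ (-γ) * |φ' x|
            ≤ u x ^ (-γ) * (|φ' x - β * φ x| + |β| * φ x) :=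
          mul_le_mul_of_nonneg_left h1 (Real.rpow_nonneg hupos.le _)
        have h3 : u x ^ (-γ) * |φ' x - β * φ x| = r x := by
          rw [hrx, hupow, hφx]
          rw [div_eq_inv_mul, mul_comm]
        have h4 : u x ^ (-γ) * (|β| * φ x) = |β| * u x ^ (1 - γ) := by
          rw [hφx]
          have : u x ^ (-γ) * u x = u x ^ (1 - γ) := by
            rw [show (1 - γ : ℝ) = -γ + 1 by ring, Real.rpow_add_one (ne_of_gt hupos)]
          calc u x ^ (-γ) * (|β| * u x) = |β| * (u x ^ (-γ) * u x) := by ring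
            _ = |β| * u x ^ (1 - γ) := by rw [this]
        have h5 : u x ^ (1 - γ) ≤ M + 1 := by
          calc u x ^ (1 - γ) ≤ (M + 1) ^ (1 - γ) :=
                Real.rpow_le_rpow hupos.le (by linarith [huM x hxIcc]) h1γ.le
            _ ≤ (M + 1) ^ (1:ℝ) :=
                Real.rpow_le_rpow_of_exponent_le (by linarith) (by linarith)
            _ = M + 1 := Real.rpow_one _
        calc u x ^ (-γ) * |φ' x|
            ≤ u x ^ (-γ) * |φ' x - β * φ x| + u x ^ (-γ) * (|β| * φ x) := by
              rw [← mul_add]; exact h2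
          _ = r x + |β| * u x ^ (1 - γ) := by rw [h3, h4]
          _ ≤ r x + |β| * (M + 1) := by
              have := mul_le_mul_of_nonneg_left h5 (abs_nonneg β)
              linarith
      constructor
      · have hval : ψ' x = (1 - γ) * φ' x * u x ^ (-γ) := by
          simp only [hψdef]; rw [if_pos hupos]
        rw [hval, abs_mul, abs_mul, abs_of_pos h1γ,
          abs_of_nonneg (Real.rpow_nonneg hupos.le _)]
        calc (1 - γ) * |φ' x| * u x ^ (-γ)
            = (1 - γ) * (u x ^ (-γ) * |φ' x|) := by ring
          _ ≤ (1 - γ) * (r x + |β| * (M + 1)) :=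
              mul_le_mul_of_nonneg_left core h1γ.le
          _ = G x := rfl
      · intro ε hε
        have hle : (u x + ε) ^ (-γ) ≤ u x ^ (-γ) :=
          Real.rpow_le_rpow_of_nonpos hupos (by linarith) (by linarith)
        rw [abs_mul, abs_mul, abs_of_pos h1γ,
          abs_of_nonneg (Real.rpow_nonneg (by linarith) _), hfx]
        calc (1 - γ) * (u x + ε) ^ (-γ) * |φ' x|
            ≤ (1 - γ) * (u x ^ (-γ) * |φ' x|) := by
              have := mul_le_mul_of_nonneg_right hle (abs_nonneg (φ' x))
              have h1γ' := h1γ.le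
              nlinarith
          _ ≤ (1 - γ) * (r x + |β| * (M + 1)) :=
              mul_le_mul_of_nonneg_left core h1γ.le
          _ = G x := rfl
  -- integrability of ψ'
  have haeIoo : ∀ᵐ x ∂(volume.restrict (Icc (0:ℝ) T)), x ∈ Ioo (0:ℝ) T := by
    rw [← Measure.restrict_congr_set Ioo_ae_eq_Icc]
    exact ae_restrict_mem measurableSet_Ioo
  have hψ'Icc : IntegrableOn ψ' (Icc 0 T) volume := by
    apply Integrable.mono' hG_int hψmeas
    filter_upwards [ae_restrict_of_ae hbound, haeIoo] with x hb hIoo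
    rw [Real.norm_eq_abs]
    exact (hb hIoo).1
  have hψint : IntervalIntegrable ψ' volume 0 T := by
    rw [intervalIntegrable_iff_integrableOn_Icc_of_le hT.le]
    exact hψ'Icc
  -- the FTC identity for ψ = u^{1-γ}
  have hFTC : ∀ t ∈ Icc (0:ℝ) T, u t ^ (1 - γ) = ∫ s in (0:ℝ)..t, ψ' s := by
    intro t htm
    have h0t := htm.1
    set εs : ℕ → ℝ := fun n => ((n : ℝ) + 1)⁻¹ with hεs
    have hεpos : ∀ n, 0 < εs n := fun n => by positivity
    have hεlim : Tendsto εs atTop (𝓝 0) := by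
      simpa only [hεs, one_div] using tendsto_one_div_add_atTop_nhds_zero_nat (𝕜 := ℝ)
    have hL : ∀ n, (u t + εs n) ^ (1 - γ) - (εs n) ^ (1 - γ)
        = ∫ s in (0:ℝ)..t, (1 - γ) * (u s + εs n) ^ (-γ) * f s :=
      fun n => ftc_rpow_shift hγ0 hγ1 f hf u hu hun (hεpos n) htm
    have hlim1 : Tendsto (fun n => (u t + εs n) ^ (1 - γ) - (εs n) ^ (1 - γ)) atTop
        (𝓝 (u t ^ (1 - γ))) := by
      have t1 : Tendsto (fun n => u t + εs n) atTop (𝓝 (u t)) := by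
        simpa using tendsto_const_nhds.add hεlim
      have t2 : Tendsto (fun n => (u t + εs n) ^ (1 - γ)) atTop (𝓝 (u t ^ (1 - γ))) :=
        t1.rpow_const (Or.inr h1γ.le)
      have t3 : Tendsto (fun n => (εs n) ^ (1 - γ)) atTop (𝓝 (0:ℝ)) := by
        have := hεlim.rpow_const (Or.inr h1γ.le)
        simpa [Real.zero_rpow h1γne] using this
      simpa using t2.sub t3
    have hlim2 : Tendsto (fun n => ∫ s in (0:ℝ)..t, (1 - γ) * (u s + εs n) ^ (-γ) * f s) atTop
        (𝓝 (∫ s in (0:ℝ)..t, ψ' s)) := by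
      apply intervalIntegral.tendsto_integral_filter_of_dominated_convergence G
      · apply Eventually.of_forall
        intro n
        exact (((hucont.measurable.add_const _).pow measurable_const).const_mul
          _).aestronglyMeasurable.mul (hf.aestronglyMeasurable.restrict)
      · apply Eventually.of_forall
        intro n
        filter_upwards [hbound, haeT] with x hb hxT hxm
        rw [uIoc_of_le h0t] at hxm
        have hxIoo : x ∈ Ioo (0:ℝ) T :=
          ⟨hxm.1, lt_of_le_of_ne (le_trans hxm.2 htm.2) hxT⟩
        rw [Real.norm_eq_abs]
        exact (hb hxIoo).2 (εs n) (hεpos n)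
      · rw [intervalIntegrable_iff_integrableOn_Icc_of_le h0t]
        exact hG_int.mono_set (Icc_subset_Icc le_rfl htm.2)
      · filter_upwards [haeZ, haeT] with x hZ hxT hxm
        rw [uIoc_of_le h0t] at hxm
        have hxIoo : x ∈ Ioo (0:ℝ) T :=
          ⟨hxm.1, lt_of_le_of_ne (le_trans hxm.2 htm.2) hxT⟩
        have hxIcc : x ∈ Icc (0:ℝ) T := Ioo_subset_Icc_self hxIoo
        by_cases h0 : u x = 0
        · have hfx : f x = 0 := hZ hxIoo h0
          have hψ0 : ψ' x = 0 := by simp [hψdef, h0]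
          rw [hψ0]
          simp only [hfx, mul_zero]
          exact tendsto_const_nhds
        · have hupos : 0 < u x := (hun x hxIcc).lt_of_ne (Ne.symm h0)
          have hψval : ψ' x = (1 - γ) * (u x) ^ (-γ) * f x := by
            simp only [hψdef]
            rw [if_pos hupos, hfeqIcc x hxIcc]
            ring
          rw [hψval]
          have t1 : Tendsto (fun n => u x + εs n) atTop (𝓝 (u x)) := by
            simpa using tendsto_const_nhds.add hεlim
          have t2 : Tendsto (fun n => (u x + εs n) ^ (-γ)) atTop (𝓝 (u x ^ (-γ))) :=
            t1.rpow_const (Or.inl (ne_of_gt hupos))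
          exact (t2.const_mul _).mul_const _
    have := tendsto_nhds_unique hlim1 ((funext hL : _) ▸ hlim2)
    · exact this
  refine ⟨by rw [hφ0, Real.zero_rpow h1γne], ψ', hψint, ?_, ?_, ?_⟩
  · intro t htm
    rw [← hufeq t htm]
    exact hFTC t htm
  · apply (ae_restrict_iff' measurableSet_Icc).mpr
    apply ae_of_all
    intro t htm
    simp only [hψdef]
    rw [hufeq t htm]
  · have hcong : ∀ t ∈ Icc (0:ℝ) T,
        (ψ' t - β*(1-γ) * φ t ^ (1-γ))^2
          = (1-γ)^2 * (if φ t = 0 then 0 else ((φ' t - β*φ t)/φ t^γ)^2) := by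
      intro t htm
      by_cases h0 : φ t = 0
      · have hu0 : u t = 0 := by rw [hufeq t htm, h0]
        rw [if_pos h0, h0, Real.zero_rpow h1γne]
        have hψ0 : ψ' t = 0 := by simp [hψdef, hu0]
        rw [hψ0]; ring
      · have hφpos : 0 < φ t := (hφnn t htm).lt_of_ne (Ne.symm h0)
        have hupos : 0 < u t := by rw [hufeq t htm]; exact hφpos
        have hψval : ψ' t = (1-γ) * φ' t * φ t ^ (-γ) := by
          simp only [hψdef]
          rw [if_pos hupos, hufeq t htm]
        rw [if_neg h0, hψval]
        have hpowpos : 0 < φ t ^ γ := Real.rpow_pos_of_pos hφpos γ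
        have e1 : φ t ^ (-γ) = (φ t ^ γ)⁻¹ := Real.rpow_neg hφpos.le γ
        have e2 : φ t ^ (1-γ) = φ t * (φ t ^ γ)⁻¹ := by
          rw [show (1-γ : ℝ) = 1 + -γ by ring, Real.rpow_add hφpos, Real.rpow_one, e1]
        rw [e1, e2]
        field_simp
    have hIcong : ∫ t in Icc (0:ℝ) T, (ψ' t - β*(1-γ) * φ t ^ (1-γ))^2
        = (1-γ)^2 * ∫ t in Icc (0:ℝ) T,
            (if φ t = 0 then 0 else ((φ' t - β*φ t)/φ t^γ)^2) := by
      rw [← MeasureTheory.integral_const_mul]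
      exact setIntegral_congr_fun measurableSet_Icc hcong
    rw [hIcong]
    have hσne : σ ≠ 0 := ne_of_gt hσ
    set J := ∫ t in Icc (0:ℝ) T, (if φ t = 0 then 0 else ((φ' t - β*φ t)/φ t^γ)^2) with hJ
    field_simp
end

section
/- Let ψ : [0,T] → [0,∞) be absolutely continuous with ψ(0) = 0. Then φ := ψ^{1/(1−γ)} (i.e. φ(t) = ψ(t)^{1/(1−γ)}) is absolutely continuous on [0,T] with φ(0) = 0, φ ≥ 0, its a.e. derivative satisfies φ'(t) = (1/(1−γ)) ψ(t)^{γ/(1−γ)} ψ'(t) for a.e. t ∈ [0,T], and I_T(φ) = (1/(2σ²(1−γ)²)) ∫₀ᵀ ( ψ'(t) − β(1−γ)ψ(t) )² dt, as an equality in [0,∞]. -/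
open MeasureTheory Set Filter Metric intervalIntegral
open scoped Topology ENNReal

private lemma prim_slope_bound {q : ℝ → ℝ} (hq : Integrable q volume) {x y : ℝ} (hxy : x < y) :
    ‖slope (fun u => ∫ s in (0:ℝ)..u, q s) x y - q x‖
      ≤ ⨍ z in Icc x y, ‖q z - q x‖ := by
  have hInt : ∀ a b : ℝ, IntervalIntegrable q volume a b := fun a b => hq.intervalIntegrable
  have hd : (0:ℝ) < y - x := by linarith
  have h1 : slope (fun u => ∫ s in (0:ℝ)..u, q s) x y - q x
      = (y - x)⁻¹ * ∫ z in x..y, (q z - q x) := by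
    rw [intervalIntegral.integral_sub (hInt x y) intervalIntegrable_const,
      intervalIntegral.integral_const, slope_def_field,
      intervalIntegral.integral_interval_sub_left (hInt 0 y) (hInt 0 x), smul_eq_mul]
    field_simp
  rw [h1]
  have h2 : ‖(y - x)⁻¹ * ∫ z in x..y, (q z - q x)‖
      ≤ (y - x)⁻¹ * ∫ z in x..y, ‖q z - q x‖ := by
    rw [norm_mul, norm_inv, Real.norm_of_nonneg hd.le]
    exact mul_le_mul_of_nonneg_left
      (intervalIntegral.norm_integral_le_integral_norm hxy.le) (by positivity)
  refine h2.trans (le_of_eq ?_)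
  rw [setAverage_eq, Real.volume_real_Icc_of_le hxy.le, smul_eq_mul,
    intervalIntegral.integral_of_le hxy.le, integral_Icc_eq_integral_Ioc]

private lemma prim_slope_bound' {q : ℝ → ℝ} (hq : Integrable q volume) {x y : ℝ} (hxy : y < x) :
    ‖slope (fun u => ∫ s in (0:ℝ)..u, q s) x y - q x‖
      ≤ ⨍ z in Icc y x, ‖q z - q x‖ := by
  have hInt : ∀ a b : ℝ, IntervalIntegrable q volume a b := fun a b => hq.intervalIntegrable
  have hd : (0:ℝ) < x - y := by linarith
  have hne : y - x ≠ 0 := by linarith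
  have h1 : slope (fun u => ∫ s in (0:ℝ)..u, q s) x y - q x
      = (x - y)⁻¹ * ∫ z in y..x, (q z - q x) := by
    rw [intervalIntegral.integral_sub (hInt y x) intervalIntegrable_const,
      intervalIntegral.integral_const, slope_def_field,
      ← intervalIntegral.integral_interval_sub_left (hInt 0 x) (hInt 0 y), smul_eq_mul]
    field_simp
    ring
  rw [h1]
  have h2 : ‖(x - y)⁻¹ * ∫ z in y..x, (q z - q x)‖
      ≤ (x - y)⁻¹ * ∫ z in y..x, ‖q z - q x‖ := by
    rw [norm_mul, norm_inv, Real.norm_of_nonneg hd.le]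
    exact mul_le_mul_of_nonneg_left
      (intervalIntegral.norm_integral_le_integral_norm hxy.le) (by positivity)
  refine h2.trans (le_of_eq ?_)
  rw [setAverage_eq, Real.volume_real_Icc_of_le hxy.le, smul_eq_mul,
    intervalIntegral.integral_of_le hxy.le, integral_Icc_eq_integral_Ioc]

private lemma ae_hasDerivAt_primitive {q : ℝ → ℝ} (hq : Integrable q volume) :
    ∀ᵐ x : ℝ, HasDerivAt (fun u => ∫ s in (0:ℝ)..u, q s) (q x) x := by
  filter_upwards [(IsUnifLocDoublingMeasure.vitaliFamily (volume : Measure ℝ)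
    1).ae_tendsto_average_norm_sub hq.locallyIntegrable] with x hx
  rw [hasDerivAt_iff_tendsto_slope, ← nhdsLT_sup_nhdsGT x, tendsto_sup]
  constructor
  · -- left
    rw [tendsto_iff_norm_sub_tendsto_zero]
    have havg : Tendsto (fun y => ⨍ z in Icc y x, ‖q z - q x‖) (𝓝[<] x) (𝓝 0) :=
      hx.comp (Real.tendsto_Icc_vitaliFamily_left x)
    refine squeeze_zero' (Eventually.of_forall fun y => norm_nonneg _) ?_ havg
    filter_upwards [self_mem_nhdsWithin] with y (hy : y < x)
    exact prim_slope_bound' hq hy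
  · rw [tendsto_iff_norm_sub_tendsto_zero]
    have havg : Tendsto (fun y => ⨍ z in Icc x y, ‖q z - q x‖) (𝓝[>] x) (𝓝 0) :=
      hx.comp (Real.tendsto_Icc_vitaliFamily_right x)
    refine squeeze_zero' (Eventually.of_forall fun y => norm_nonneg _) ?_ havg
    filter_upwards [self_mem_nhdsWithin] with y (hy : x < y)
    exact prim_slope_bound hq hy

private lemma integral_le_of_monotone {a b : ℝ} (hab : a ≤ b) (w g : ℝ → ℝ)
    (hw : Monotone w) (hwb : ∀ x, b ≤ x → w x = w b)
    (hg : IntegrableOn g (Ioo a b))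
    (hae : ∀ᵐ x ∂(volume.restrict (Ioo a b)), HasDerivAt w (g x) x)
    (hgnn : ∀ x, 0 ≤ g x) :
    ∫ x in Ioo a b, g x ≤ w b - w a := by
  classical
  set sn : ℕ → ℝ → ℝ := fun n x => (w (x + 1/(n+1)) - w x) * (n+1) with hsn
  have heps : ∀ n : ℕ, (0:ℝ) < 1/(n+1) := fun n => by positivity
  have hsnn : ∀ n x, 0 ≤ sn n x := fun n x =>
    mul_nonneg (sub_nonneg.2 (hw (by linarith [heps n]))) (by positivity)
  -- pointwise convergence a.e.
  have htend : ∀ᵐ x ∂(volume.restrict (Ioo a b)),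
      Tendsto (fun n => sn n x) atTop (𝓝 (g x)) := by
    filter_upwards [hae] with x hx
    have hslope := hasDerivAt_iff_tendsto_slope.1 hx
    have hseq : Tendsto (fun n : ℕ => x + 1/(n+1 : ℝ)) atTop (𝓝[≠] x) := by
      apply tendsto_nhdsWithin_of_tendsto_nhds_of_eventually_within
      · simpa using tendsto_const_nhds.add (tendsto_one_div_add_atTop_nhds_zero_nat (𝕜 := ℝ))
      · exact Eventually.of_forall fun n => by
          simp only [mem_compl_iff, mem_singleton_iff]
          intro h
          nlinarith [heps n]
    have := hslope.comp hseq
    refine this.congr fun n => ?_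
    simp only [Function.comp_apply, slope_def_field]
    rw [add_sub_cancel_left, div_div_eq_mul_div, div_one]
  -- measurability
  have hwm : Measurable w := hw.measurable
  have hmeas : ∀ n, Measurable fun x => ENNReal.ofReal (sn n x) := fun n =>
    (((hwm.comp (measurable_id.add_const _)).sub hwm).mul_const _).ennreal_ofReal
  -- per-n integral bound
  have hbound : ∀ n : ℕ, (∫⁻ x in Ioo a b, ENNReal.ofReal (sn n x))
      ≤ ENNReal.ofReal (w b - w a) := by
    intro n
    set ε : ℝ := 1/(n+1) with hε
    have hεpos := heps n
    have hwint : ∀ a' b' : ℝ, IntervalIntegrable w volume a' b' :=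
      fun a' b' => hw.intervalIntegrable
    have hsnint : IntegrableOn (sn n) (Ioo a b) := by
      apply Measure.integrableOn_of_bounded (M := (w (b+1) - w a) * (n+1))
      · simp [Real.volume_Ioo]
      · exact (((hwm.comp (measurable_id.add_const _)).sub hwm).mul_const _).aestronglyMeasurable
      · filter_upwards [ae_restrict_mem measurableSet_Ioo] with x hx
        rw [Real.norm_of_nonneg (hsnn n x)]
        have h1 : w (x + ε) ≤ w (b + 1) := hw (by
          have : ε ≤ 1 := by
            rw [hε, div_le_one (by positivity)]; linarith
          nlinarith [hx.2])
        have h2 : w a ≤ w x := hw hx.1.le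
        have : (0:ℝ) ≤ (n:ℝ)+1 := by positivity
        apply mul_le_mul_of_nonneg_right _ this
        linarith
    have hsint : IntervalIntegrable (sn n) volume a b :=
      (intervalIntegrable_iff_integrableOn_Ioo_of_le hab).2 hsnint
    -- real integral computation
    have hreal : ∫ x in a..b, sn n x ≤ w b - w a := by
      have hcomp : IntervalIntegrable (fun x => w (x + ε)) volume a b := by
        have := (hwint (a+ε) (b+ε)).comp_add_right ε
        simpa using this
      have e1 : ∫ x in a..b, sn n x
          = ((∫ x in a..b, w (x + ε)) - ∫ x in a..b, w x) * ((n:ℝ)+1) := by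
        rw [hsn, intervalIntegral.integral_mul_const,
          intervalIntegral.integral_sub hcomp (hwint a b)]
      have e2 : (∫ x in a..b, w (x + ε)) = ∫ x in (a+ε)..(b+ε), w x :=
        intervalIntegral.integral_comp_add_right w ε
      have split1 : (∫ x in (a+ε)..b, w x) + ∫ x in b..(b+ε), w x
          = ∫ x in (a+ε)..(b+ε), w x :=
        intervalIntegral.integral_add_adjacent_intervals (hwint _ _) (hwint _ _)
      have split2 : (∫ x in a..(a+ε), w x) + ∫ x in (a+ε)..b, w x
          = ∫ x in a..b, w x :=
        intervalIntegral.integral_add_adjacent_intervals (hwint _ _) (hwint _ _)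
      have e3 : ∫ x in b..(b+ε), w x = ε * w b := by
        rw [intervalIntegral.integral_congr (g := fun _ => w b)
          (fun x hx => by
            rcases hx with ⟨h1, h2⟩
            rw [inf_of_le_left (by linarith)] at h1
            exact hwb x h1),
          intervalIntegral.integral_const, smul_eq_mul, add_sub_cancel_left]
      have e4 : ε * w a ≤ ∫ x in a..(a+ε), w x := by
        have := intervalIntegral.integral_mono_on (by linarith : a ≤ a + ε)
          (_root_.intervalIntegrable_const (c := w a)) (hwint a (a+ε))
          (fun x hx => hw hx.1)
        rwa [intervalIntegral.integral_const, smul_eq_mul, add_sub_cancel_left] at this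
      have hmul : ((n:ℝ)+1) * ε = 1 := by
        rw [hε]; field_simp
      calc ∫ x in a..b, sn n x
          = ((∫ x in (a+ε)..(b+ε), w x) - ∫ x in a..b, w x) * ((n:ℝ)+1) := by rw [e1, e2]
        _ = ((∫ x in b..(b+ε), w x) - ∫ x in a..(a+ε), w x) * ((n:ℝ)+1) := by
            rw [← split1, ← split2]; ring
        _ ≤ (ε * w b - ε * w a) * ((n:ℝ)+1) := by
            rw [e3]
            have : (0:ℝ) ≤ (n:ℝ)+1 := by positivity
            apply mul_le_mul_of_nonneg_right _ this
            linarith [e4]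
        _ = w b - w a := by
            have : (ε * w b - ε * w a) * ((n:ℝ)+1) = (((n:ℝ)+1) * ε) * (w b - w a) := by ring
            rw [this, hmul, one_mul]
      -- end calc
    calc (∫⁻ x in Ioo a b, ENNReal.ofReal (sn n x))
        = ENNReal.ofReal (∫ x in Ioo a b, sn n x) :=
          (ofReal_integral_eq_lintegral_ofReal hsnint
            (Eventually.of_forall fun x => hsnn n x)).symm
      _ ≤ ENNReal.ofReal (w b - w a) := by
          apply ENNReal.ofReal_le_ofReal
          rw [← integral_Ioc_eq_integral_Ioo, ← intervalIntegral.integral_of_le hab]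
          exact hreal
  -- combine via Fatou
  have hkey : (∫⁻ x in Ioo a b, ENNReal.ofReal (g x)) ≤ ENNReal.ofReal (w b - w a) := by
    have h1 : (∫⁻ x in Ioo a b, ENNReal.ofReal (g x))
        = ∫⁻ x in Ioo a b, liminf (fun n => ENNReal.ofReal (sn n x)) atTop := by
      apply lintegral_congr_ae
      filter_upwards [htend] with x hx
      exact (((ENNReal.continuous_ofReal.tendsto _).comp hx).liminf_eq).symm
    rw [h1]
    refine (lintegral_liminf_le hmeas).trans ?_
    refine (Filter.liminf_le_liminf (Eventually.of_forall hbound)).trans ?_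
    simp
  have := (ofReal_integral_eq_lintegral_ofReal hg
    (Eventually.of_forall hgnn)) ▸ hkey
  exact (ENNReal.ofReal_le_ofReal_iff (sub_nonneg.2 (hw hab))).1 this

private lemma ae_zero_on_zero_set_s8 {q : ℝ → ℝ} (hq : Integrable q volume) {S : Set ℝ}
    (hS : MeasurableSet S) (hS0 : ∀ x ∈ S, (∫ s in (0:ℝ)..x, q s) = 0) :
    ∀ᵐ x : ℝ, x ∈ S → q x = 0 := by
  rw [← ae_restrict_iff' hS]
  filter_upwards [IsUnifLocDoublingMeasure.ae_tendsto_measure_inter_div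
      (μ := (volume : Measure ℝ)) S 1,
    ae_restrict_of_ae (ae_hasDerivAt_primitive hq), ae_restrict_mem hS] with x hx hder hxS
  -- x is an accumulation point of S
  have hNB : (𝓝[S \ {x}] x).NeBot := by
    rw [← mem_closure_iff_nhdsWithin_neBot, Metric.mem_closure_iff]
    by_contra h
    push_neg at h
    obtain ⟨ε, εpos, hε⟩ := h
    have htend : Tendsto (fun r : ℝ =>
        volume (S ∩ closedBall x r) / volume (closedBall x r)) (𝓝[>] (0:ℝ)) (𝓝 1) := by
      apply hx (fun _ => x) id tendsto_id
      filter_upwards [self_mem_nhdsWithin] with r (hr : 0 < r)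
      exact mem_closedBall_self (by simpa using hr.le)
    have hzero : ∀ᶠ r in 𝓝[>] (0:ℝ), (fun r : ℝ =>
        volume (S ∩ closedBall x r) / volume (closedBall x r)) r = 0 := by
      filter_upwards [Ioo_mem_nhdsGT_of_mem ⟨le_refl (0:ℝ), εpos⟩] with r hr
      have hsub : S ∩ closedBall x r ⊆ {x} := by
        rintro y ⟨hyS, hy⟩
        by_contra hne
        exact absurd (hε y ⟨hyS, hne⟩) (not_le.2 (by
          rw [mem_closedBall, dist_comm] at hy
          calc dist x y ≤ r := hy
            _ < ε := hr.2))
      have : volume (S ∩ closedBall x r) = 0 :=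
        le_antisymm ((measure_mono hsub).trans (by simp)) (by simp)
      simp [this]
    have : (1:ℝ≥0∞) = 0 := tendsto_nhds_unique (htend.congr' hzero) tendsto_const_nhds
    simp at this
  -- slope along S is 0, hence q x = 0
  have h1 : Tendsto (slope (fun u => ∫ s in (0:ℝ)..u, q s) x) (𝓝[S \ {x}] x) (𝓝 (q x)) :=
    (hasDerivAt_iff_tendsto_slope.1 hder).mono_left
      (nhdsWithin_mono x (fun y hy => hy.2))
  have h2 : Tendsto (slope (fun u => ∫ s in (0:ℝ)..u, q s) x) (𝓝[S \ {x}] x) (𝓝 0) := by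
    apply Tendsto.congr' _ tendsto_const_nhds
    filter_upwards [self_mem_nhdsWithin] with y hy
    rw [slope_def_field, hS0 y hy.1, hS0 x hxS]
    simp
  exact (tendsto_nhds_unique h1 h2)

private lemma rpow_primitive_eq {f : ℝ → ℝ} (hf : Integrable f volume) {p : ℝ} (hp : 1 ≤ p) :
    Integrable (fun s => p * (∫ u in (0:ℝ)..s, f u) ^ (p-1) * f s) volume ∧
    ∀ t : ℝ, 0 ≤ t → (∫ s in (0:ℝ)..t, f s) ^ p
        = ∫ s in (0:ℝ)..t, p * (∫ u in (0:ℝ)..s, f u) ^ (p-1) * f s := by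
  set P : ℝ → ℝ := fun u => ∫ s in (0:ℝ)..u, f s with hP
  set g : ℝ → ℝ := fun s => p * P s ^ (p-1) * f s with hgdef
  have hPcont : Continuous P := hf.continuous_primitive 0
  set M : ℝ := ∫ x, |f x| with hMdef
  have hM0 : 0 ≤ M := integral_nonneg fun x => abs_nonneg _
  have hM : ∀ x, |P x| ≤ M := by
    intro x
    rcases le_or_gt 0 x with hx | hx
    · calc |P x| ≤ ∫ s in (0:ℝ)..x, |f s| := by
            simpa [Real.norm_eq_abs] using intervalIntegral.norm_integral_le_integral_norm
              (f := f) (μ := volume) hx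
        _ ≤ M := by
            rw [intervalIntegral.integral_of_le hx]
            exact (setIntegral_le_integral hf.abs
              (Eventually.of_forall fun s => abs_nonneg _))
    · have : P x = -∫ s in x..(0:ℝ), f s := by rw [← intervalIntegral.integral_symm]
      rw [this, abs_neg]
      calc |∫ s in x..(0:ℝ), f s| ≤ ∫ s in x..(0:ℝ), |f s| := by
            simpa [Real.norm_eq_abs] using intervalIntegral.norm_integral_le_integral_norm
              (f := f) (μ := volume) hx.le
        _ ≤ M := by
            rw [intervalIntegral.integral_of_le hx.le]
            exact (setIntegral_le_integral hf.abs
              (Eventually.of_forall fun s => abs_nonneg _))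
  set C : ℝ := p * (M+1) ^ (p-1) with hCdef
  have hC : ∀ y : ℝ, |y| ≤ M + 1 → |p * y ^ (p-1)| ≤ C := by
    intro y hy
    rw [abs_mul, abs_of_nonneg (by linarith : (0:ℝ) ≤ p)]
    refine mul_le_mul_of_nonneg_left ?_ (by linarith)
    calc |y ^ (p-1)| ≤ |y| ^ (p-1) := Real.abs_rpow_le_abs_rpow y (p-1)
      _ ≤ (M+1) ^ (p-1) := Real.rpow_le_rpow (abs_nonneg y) hy (by linarith)
  have hC0 : 0 ≤ C := le_trans (abs_nonneg _) (hC 0 (by simp; linarith))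
  -- g is integrable
  have hgint : Integrable g volume := by
    apply Integrable.bdd_mul (c := C) hf
    · exact (continuous_const.mul ((Real.continuous_rpow_const
        (by linarith : (0:ℝ) ≤ p - 1)).comp hPcont)).aestronglyMeasurable
    · exact Eventually.of_forall fun x => by
        rw [Real.norm_eq_abs]
        exact hC (P x) (by linarith [hM x])
  have hbig : Integrable (fun x => C * |f x| + |g x|) volume :=
    (hf.abs.const_mul C).add hgint.abs
  have hbignn : ∀ x, 0 ≤ C * |f x| + |g x| := fun x => by positivity
  refine ⟨hgint, fun t ht => ?_⟩
  -- derivative of F ∘ P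
  have hF : ∀ y : ℝ, HasDerivAt (fun z : ℝ => z ^ p) (p * y ^ (p-1)) y := fun y =>
    Real.hasDerivAt_rpow_const (Or.inr hp)
  -- Lipschitz bound for F on the box
  have hlip : ∀ y z : ℝ, |y| ≤ M → |z| ≤ M → |z ^ p - y ^ p| ≤ C * |z - y| := by
    intro y z hy hz
    have := Convex.norm_image_sub_le_of_norm_hasDerivWithin_le
      (f := fun z : ℝ => z ^ p) (f' := fun y => p * y ^ (p-1)) (s := Icc (-(M+1)) (M+1))
      (fun x _ => (hF x).hasDerivWithinAt)
      (fun x hx => by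
        rw [Real.norm_eq_abs]
        exact hC x (abs_le.2 ⟨hx.1, hx.2⟩))
      (convex_Icc _ _) (abs_le.1 (by linarith : |y| ≤ M+1)) (abs_le.1 (by linarith : |z| ≤ M+1))
    simpa [Real.norm_eq_abs] using this
  set G : ℝ → ℝ := fun u => ∫ s in (0:ℝ)..u, g s with hGdef
  set Φ : ℝ → ℝ := fun u => ∫ s in (0:ℝ)..u, (C * |f s| + |g s|) with hΦdef
  set D : ℝ → ℝ := fun u => P u ^ p - G u with hDdef
  -- increment bounds
  have hincr : ∀ s t' : ℝ, s ≤ t' → |D t' - D s| ≤ Φ t' - Φ s := by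
    intro s t' hst
    have hPint : ∀ a b : ℝ, IntervalIntegrable f volume a b := fun a b => hf.intervalIntegrable
    have hGint : ∀ a b : ℝ, IntervalIntegrable g volume a b := fun a b => hgint.intervalIntegrable
    have e1 : P t' - P s = ∫ u in s..t', f u :=
      intervalIntegral.integral_interval_sub_left (hPint 0 t') (hPint 0 s)
    have e2 : G t' - G s = ∫ u in s..t', g u :=
      intervalIntegral.integral_interval_sub_left (hGint 0 t') (hGint 0 s)
    have e3 : Φ t' - Φ s = ∫ u in s..t', (C * |f u| + |g u|) :=
      intervalIntegral.integral_interval_sub_left hbig.intervalIntegrable hbig.intervalIntegrable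
    have e4 : Φ t' - Φ s = C * (∫ u in s..t', |f u|) + ∫ u in s..t', |g u| := by
      rw [e3, intervalIntegral.integral_add ((hf.abs.const_mul C).intervalIntegrable)
        (hgint.abs.intervalIntegrable), intervalIntegral.integral_const_mul]
    have b1 : |P t' ^ p - P s ^ p| ≤ C * ∫ u in s..t', |f u| := by
      refine (hlip (P s) (P t') (hM s) (hM t')).trans ?_
      refine mul_le_mul_of_nonneg_left ?_ hC0
      rw [e1]
      simpa [Real.norm_eq_abs] using
        intervalIntegral.norm_integral_le_integral_norm (f := f) (μ := volume) hst
    have b2 : |G t' - G s| ≤ ∫ u in s..t', |g u| := by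
      rw [e2]
      simpa [Real.norm_eq_abs] using
        intervalIntegral.norm_integral_le_integral_norm (f := g) (μ := volume) hst
    rw [e4]
    have : D t' - D s = (P t' ^ p - P s ^ p) - (G t' - G s) := by rw [hDdef]; ring
    rw [this]
    calc |(P t' ^ p - P s ^ p) - (G t' - G s)| ≤ |P t' ^ p - P s ^ p| + |G t' - G s| :=
          abs_sub _ _
      _ ≤ C * (∫ u in s..t', |f u|) + ∫ u in s..t', |g u| := add_le_add b1 b2
  -- a.e. derivatives
  have haeD : ∀ᵐ x : ℝ, HasDerivAt D 0 x ∧ HasDerivAt Φ (C * |f x| + |g x|) x := by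
    filter_upwards [ae_hasDerivAt_primitive hf, ae_hasDerivAt_primitive hgint,
      ae_hasDerivAt_primitive hbig] with x h1 h2 h3
    constructor
    · have hcomp : HasDerivAt (fun u => P u ^ p) (p * P x ^ (p-1) * f x) x :=
        (hF (P x)).comp x h1
      have : HasDerivAt D (p * P x ^ (p-1) * f x - g x) x := hcomp.sub h2
      simpa [hgdef] using this
    · exact h3
  -- apply monotone lemma for each t
  have hD0 : D 0 = 0 := by
    simp [hDdef, hGdef, hP, intervalIntegral.integral_same, Real.zero_rpow
      (by linarith : p ≠ 0)]
  have hΦ0 : Φ 0 = 0 := by simp [hΦdef]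
  have main : ∀ σsgn : ℝ, σsgn = 1 ∨ σsgn = -1 → 0 ≤ σsgn * D t := by
    intro σsgn hσsgn
    set u : ℝ → ℝ := fun x => Φ x + σsgn * D x with hu
    have humono : MonotoneOn u (Icc 0 t) := by
      intro s hs t' ht' hst
      have := hincr s t' hst
      have hsabs : |σsgn| = 1 := by rcases hσsgn with h | h <;> simp [h]
      have habs : |σsgn * (D t' - D s)| ≤ Φ t' - Φ s := by
        rw [abs_mul, hsabs, one_mul]; exact this
      have := abs_le.1 habs
      simp only [hu]
      nlinarith [this.1]
    set w : ℝ → ℝ := fun x => u (max 0 (min x t)) with hw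
    have hwmono : Monotone w := by
      intro x y hxy
      apply humono
      · exact ⟨le_max_left _ _, max_le ht (min_le_right _ _)⟩
      · exact ⟨le_max_left _ _, max_le ht (min_le_right _ _)⟩
      · exact max_le_max (le_refl 0) (min_le_min hxy (le_refl t))
    have hwt : ∀ x, t ≤ x → w x = w t := by
      intro x hx
      simp only [hw, min_self, min_eq_right hx]
    have hint' : IntegrableOn (fun x => C * |f x| + |g x|) (Ioo 0 t) volume :=
      hbig.integrableOn
    have haew : ∀ᵐ x ∂(volume.restrict (Ioo 0 t)),
        HasDerivAt w (C * |f x| + |g x|) x := by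
      filter_upwards [ae_restrict_of_ae haeD, ae_restrict_mem measurableSet_Ioo]
        with x hx hxI
      have hud : HasDerivAt u (C * |f x| + |g x|) x := by
        have h' := hx.2.add (hx.1.const_mul σsgn)
        rw [mul_zero, add_zero] at h'
        exact h'
      apply hud.congr_of_eventuallyEq
      filter_upwards [Ioo_mem_nhds hxI.1 hxI.2] with y hy
      simp only [hw, min_eq_left hy.2.le, max_eq_right hy.1.le]
    have hineq := integral_le_of_monotone ht w _ hwmono hwt hint' haew hbignn
    have hwt0 : w t = u t := by simp only [hw, min_self, max_eq_right ht]
    have hw00 : w 0 = u 0 := by simp only [hw, min_eq_left ht, max_self]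
    have hu0 : u 0 = 0 := by simp [hu, hΦ0, hD0]
    have hΦt : ∫ x in Ioo 0 t, (C * |f x| + |g x|) = Φ t := by
      rw [hΦdef]
      simp only
      rw [intervalIntegral.integral_of_le ht, integral_Ioc_eq_integral_Ioo]
    rw [hwt0, hw00, hu0, hΦt, sub_zero, hu] at hineq
    have hineq' : Φ t ≤ Φ t + σsgn * D t := hineq
    linarith
  have hpos := main 1 (Or.inl rfl)
  have hneg := main (-1) (Or.inr rfl)
  have hDt : D t = 0 := by
    rw [one_mul] at hpos
    rw [neg_one_mul] at hneg
    linarith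
  have := sub_eq_zero.1 hDt
  simpa [hGdef] using this

private lemma final_algebra {σ β γ : ℝ} (hσ : 0 < σ) (hγ1 : γ < 1) {a d : ℝ} (ha : 0 < a) :
    (1/(2*σ^2)) * (((1/(1-γ)) * a ^ (γ/(1-γ)) * d - β * a ^ (1/(1-γ)))
        / (a ^ (1/(1-γ))) ^ γ)^2
      = (1/(2*σ^2*(1-γ)^2)) * (d - β*(1-γ) * a)^2 := by
  have h1γ : (0:ℝ) < 1 - γ := by linarith
  have hcγ : (a ^ (1/(1-γ))) ^ γ = a ^ (γ/(1-γ)) := by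
    rw [← Real.rpow_mul ha.le]
    congr 1
    field_simp
  have hsplit : a ^ (1/(1-γ)) = a ^ (γ/(1-γ)) * a := by
    rw [← Real.rpow_add_one ha.ne' (γ/(1-γ))]
    congr 1
    field_simp
    ring
  set c := a ^ (γ/(1-γ)) with hc
  have hcpos : 0 < c := Real.rpow_pos_of_pos ha _
  rw [hcγ, hsplit]
  have h1 : ((1/(1-γ)) * c * d - β * (c * a)) / c = (1/(1-γ)) * d - β * a := by
    field_simp
  rw [h1]
  have h2 : (1/(1-γ)) * d - β * a = (1/(1-γ)) * (d - β*(1-γ)*a) := by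
    field_simp
  rw [h2, mul_pow]
  have hσne : σ ≠ 0 := hσ.ne'
  field_simp

/-- If `ψ ≥ 0` is absolutely continuous with `ψ(0)=0`, then
`φ = ψ^{1/(1−γ)}` is nonnegative, absolutely continuous with `φ(0)=0`, a.e. derivative
`φ' = (1/(1−γ))ψ^{γ/(1−γ)}ψ'`, and
`I_T(φ) = (1/(2σ²(1−γ)²))∫₀ᵀ(ψ' − β(1−γ)ψ)²` as an equality in `[0,∞]`. -/
theorem inverse_power_transform_rate_identity
    (σ β γ T : ℝ) (hσ : 0 < σ) (hγ : γ ∈ Set.Ico (1/2 : ℝ) 1) (hT : 0 < T)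
    (ψ ψ' : ℝ → ℝ)
    (hψint : IntervalIntegrable ψ' volume 0 T)
    (hψftc : ∀ t ∈ Set.Icc 0 T, ψ t = ∫ s in (0:ℝ)..t, ψ' s)
    (hψnn : ∀ t ∈ Set.Icc 0 T, 0 ≤ ψ t) :
    (∀ t ∈ Set.Icc 0 T, 0 ≤ ψ t ^ (1/(1-γ))) ∧
    (ψ 0) ^ (1/(1-γ)) = 0 ∧
    ∃ φ' : ℝ → ℝ, IntervalIntegrable φ' volume 0 T ∧
      (∀ t ∈ Set.Icc 0 T, ψ t ^ (1/(1-γ)) = ∫ s in (0:ℝ)..t, φ' s) ∧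
      (∀ᵐ t ∂(volume.restrict (Set.Icc 0 T)),
        φ' t = (1/(1-γ)) * ψ t ^ (γ/(1-γ)) * ψ' t) ∧
      (∫⁻ t in Set.Icc 0 T, ENNReal.ofReal
          ((1/(2*σ^2)) * (if ψ t ^ (1/(1-γ)) = 0 then 0 else
            ((φ' t - β * ψ t ^ (1/(1-γ))) / (ψ t ^ (1/(1-γ))) ^ γ)^2))) =
        ∫⁻ t in Set.Icc 0 T, ENNReal.ofReal
          ((1/(2*σ^2*(1-γ)^2)) * (ψ' t - β*(1-γ) * ψ t)^2) := by
  obtain ⟨hγhalf, hγ1⟩ := hγ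
  have h1γ : (0:ℝ) < 1 - γ := by linarith
  have hp1 : (1:ℝ) ≤ 1/(1-γ) := by
    rw [le_div_iff₀ h1γ]
    linarith
  have hpne : (1/(1-γ) : ℝ) ≠ 0 := by positivity
  have hqe : γ/(1-γ) = 1/(1-γ) - 1 := by field_simp; ring
  -- the globalized integrand
  set f : ℝ → ℝ := (Set.Icc (0:ℝ) T).indicator ψ' with hfdef
  have hfint : Integrable f volume :=
    ((intervalIntegrable_iff_integrableOn_Icc_of_le hT.le).1 hψint).integrable_indicator
      measurableSet_Icc
  set P : ℝ → ℝ := fun u => ∫ s in (0:ℝ)..u, f s with hPdef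
  have hfI : ∀ t ∈ Set.Icc (0:ℝ) T, f t = ψ' t := fun t ht => indicator_of_mem ht ψ'
  have hPeq : ∀ t ∈ Set.Icc (0:ℝ) T, P t = ψ t := by
    intro t ht
    rw [hψftc t ht, hPdef]
    apply intervalIntegral.integral_congr
    intro y hy
    rw [uIcc_of_le ht.1] at hy
    exact hfI y ⟨hy.1, hy.2.trans ht.2⟩
  obtain ⟨hgint, hftc⟩ := rpow_primitive_eq hfint hp1
  set g : ℝ → ℝ := fun s => (1/(1-γ)) * P s ^ (1/(1-γ)-1) * f s with hgdef
  set φ' : ℝ → ℝ := fun s => (1/(1-γ)) * P s ^ (γ/(1-γ)) * ψ' s with hφdef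
  have hφg : ∀ s ∈ Set.Icc (0:ℝ) T, φ' s = g s := by
    intro s hs
    rw [hφdef, hgdef]
    simp only
    rw [hqe, hfI s hs]
  -- zero set fact
  have hz : ∀ᵐ x : ℝ, P x = 0 → f x = 0 := by
    apply ae_zero_on_zero_set_s8 hfint (S := P ⁻¹' {0})
    · exact ((hfint.continuous_primitive 0).measurable) (measurableSet_singleton 0)
    · exact fun x hx => hx
  refine ⟨fun t ht => Real.rpow_nonneg (hψnn t ht) _, ?_, φ', ?_, ?_, ?_, ?_⟩
  · rw [hψftc 0 ⟨le_refl 0, hT.le⟩, intervalIntegral.integral_same,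
      Real.zero_rpow hpne]
  · -- interval integrability of φ'
    rw [intervalIntegrable_iff_integrableOn_Ioc_of_le hT.le]
    apply (hgint.integrableOn (s := Set.Ioc 0 T)).congr_fun
    · exact fun s hs => (hφg s ⟨hs.1.le, hs.2⟩).symm
    · exact measurableSet_Ioc
  · -- FTC
    intro t ht
    rw [← hPeq t ht, hftc t ht.1]
    apply intervalIntegral.integral_congr
    intro y hy
    rw [uIcc_of_le ht.1] at hy
    exact (hφg y ⟨hy.1, hy.2.trans ht.2⟩).symm
  · -- a.e. identity
    filter_upwards [ae_restrict_mem measurableSet_Icc] with t ht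
    rw [hφdef]
    simp only
    rw [hPeq t ht]
  · -- lintegral identity
    apply lintegral_congr_ae
    filter_upwards [ae_restrict_of_ae hz, ae_restrict_mem measurableSet_Icc] with t hzt ht
    have hPt : P t = ψ t := hPeq t ht
    have hft : f t = ψ' t := hfI t ht
    rcases eq_or_lt_of_le (hψnn t ht) with h0 | hpos
    · -- ψ t = 0
      have hψ'0 : ψ' t = 0 := by
        rw [← hft]
        exact hzt (by rw [hPt, ← h0])
      rw [if_pos (by rw [← h0, Real.zero_rpow hpne])]
      rw [← h0, hψ'0]
      norm_num
    · rw [if_neg (Real.rpow_pos_of_pos hpos _).ne']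
      have hφt : φ' t = (1/(1-γ)) * ψ t ^ (γ/(1-γ)) * ψ' t := by
        rw [hφdef]; simp only; rw [hPt]
      rw [hφt, final_algebra hσ hγ1 hpos]
end

section
/- Let T > 0, b ∈ ℝ with b ≠ 0, and z ∈ ℝ. For every absolutely continuous ψ : [0,T] → ℝ with ψ(0) = 0, ψ(T) = z and square-integrable a.e. derivative ψ', one has ∫₀ᵀ ( ψ'(t) − b ψ(t) )² dt ≥ 2b e^{−2bT} z² / (1 − e^{−2bT}), and equality holds for the function ψ*(t) := z ( e^{bt} − e^{−bt} ) / ( e^{bT} − e^{−bT} ). (Note the right-hand side is nonnegative for either sign of b.) -/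
open MeasureTheory Set

lemma exp_interval_int (c a B : ℝ) (hc : c ≠ 0) :
    ∫ t in a..B, Real.exp (c*t) = (Real.exp (c*B) - Real.exp (c*a))/c := by
  have hderiv : ∀ t ∈ Set.uIcc a B, HasDerivAt (fun t => Real.exp (c*t)/c) (Real.exp (c*t)) t := by
    intro t _
    have h1 : HasDerivAt (fun t : ℝ => c*t) c t := by
      simpa using (hasDerivAt_id t).const_mul c
    have := (h1.exp).div_const c
    simpa [mul_comm, mul_div_assoc, mul_div_cancel_left₀ _ hc] using this
  have hint : IntervalIntegrable (fun t => Real.exp (c*t)) volume a B :=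
    (Real.continuous_exp.comp (continuous_const.mul continuous_id)).intervalIntegrable a B
  rw [intervalIntegral.integral_eq_sub_of_hasDerivAt hderiv hint]
  ring

lemma cs_int {α : Type*} [MeasurableSpace α] (μ : Measure α) (f g : α → ℝ)
    (hf : MemLp f 2 μ) (hg : MemLp g 2 μ) (hC : 0 < ∫ x, g x ^ 2 ∂μ) :
    (∫ x, f x * g x ∂μ)^2 ≤ (∫ x, f x ^ 2 ∂μ) * (∫ x, g x ^ 2 ∂μ) := by
  set A := ∫ x, f x ^ 2 ∂μ with hA
  set C := ∫ x, g x ^ 2 ∂μ with hCdef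
  set B := ∫ x, f x * g x ∂μ with hB
  have hf2 : Integrable (fun x => f x ^ 2) μ := hf.integrable_sq
  have hg2 : Integrable (fun x => g x ^ 2) μ := hg.integrable_sq
  have hfg : Integrable (fun x => f x * g x) μ := by
    apply Integrable.mono' ((hf2.add hg2).const_mul (1/2 : ℝ)) (hf.1.mul hg.1)
    filter_upwards with x
    simp only [Real.norm_eq_abs, Pi.add_apply, Pi.mul_apply, abs_mul]
    nlinarith [sq_nonneg (|f x| - |g x|), abs_nonneg (f x), abs_nonneg (g x),
      sq_abs (f x), sq_abs (g x)]
  have key : (0:ℝ) ≤ C^2*A - 2*C*B*B + B^2*C := by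
    have h0 : (0:ℝ) ≤ ∫ x, (C * f x - B * g x)^2 ∂μ :=
      integral_nonneg fun x => sq_nonneg _
    have hi1 : Integrable (fun x => C^2 * (f x ^ 2) - 2*C*B * (f x * g x)) μ :=
      (hf2.const_mul (C^2)).sub (hfg.const_mul (2*C*B))
    have hi2 : Integrable (fun x => B^2 * (g x ^ 2)) μ := hg2.const_mul _
    have hexp : ∫ x, (C * f x - B * g x)^2 ∂μ = C^2*A - 2*C*B*B + B^2*C := by
      have heq : (fun x => (C * f x - B * g x)^2)
          = fun x => (C^2 * (f x ^ 2) - (2*C*B) * (f x * g x)) + B^2 * (g x ^ 2) := by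
        funext x; ring
      rw [heq, integral_add hi1 hi2,
        integral_sub (hf2.const_mul (C^2)) (hfg.const_mul (2*C*B)),
        integral_const_mul, integral_const_mul, integral_const_mul]
    linarith [hexp ▸ h0]
  nlinarith [key, hC]

-- Fubini step: ∫_{Icc 0 T} e^{-bt} ψ(t) dt = ∫_{Icc 0 T} w(s) ψ'(s) ds
-- where w(s) = (e^{-bs} - e^{-bT})/b.
lemma fubini_step (T b : ℝ) (hT : 0 < T) (hb : b ≠ 0) (ψ ψ' : ℝ → ℝ)
    (hψ'int : Integrable ψ' (volume.restrict (Icc 0 T)))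
    (hftc : ∀ t ∈ Icc 0 T, ψ t = ∫ s in (0:ℝ)..t, ψ' s) :
    ∫ t in Icc 0 T, Real.exp (-b*t) * ψ t
      = ∫ s in Icc 0 T, ((Real.exp (-b*s) - Real.exp (-b*T))/b) * ψ' s := by
  set μ := volume.restrict (Icc (0:ℝ) T) with hμ
  set S : Set (ℝ×ℝ) := {p : ℝ×ℝ | 0 < p.2 ∧ p.2 ≤ p.1} with hS
  have hSm : MeasurableSet S := by
    apply MeasurableSet.inter
    · exact measurableSet_lt measurable_const measurable_snd
    · exact measurableSet_le measurable_snd measurable_fst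
  set G0 : ℝ×ℝ → ℝ := fun p => Real.exp (-b*p.1) * ψ' p.2 with hG0
  set Fu : ℝ×ℝ → ℝ := S.indicator G0 with hFu
  have hexpint : Integrable (fun t => Real.exp (-b*t)) μ :=
    (Real.continuous_exp.comp (continuous_const.mul continuous_id)).integrableOn_Icc
  have hG0int : Integrable G0 (μ.prod μ) := hexpint.mul_prod hψ'int
  have hFuint : Integrable Fu (μ.prod μ) := hG0int.indicator hSm
  -- lhs = double integral
  have lhs_eq : ∫ t, Real.exp (-b*t) * ψ t ∂μ = ∫ t, ∫ s, Fu (t, s) ∂μ ∂μ := by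
    apply setIntegral_congr_fun measurableSet_Icc
    intro t ht
    show Real.exp (-b*t) * ψ t = ∫ s, Fu (t, s) ∂μ
    have h1 : ψ t = ∫ s, (Ioc (0:ℝ) t).indicator ψ' s ∂μ := by
      rw [hftc t ht, intervalIntegral.integral_of_le ht.1,
        integral_indicator measurableSet_Ioc, hμ,
        Measure.restrict_restrict measurableSet_Ioc,
        inter_eq_self_of_subset_left (Ioc_subset_Icc_self.trans (Icc_subset_Icc_right ht.2))]
    rw [h1, ← integral_const_mul]
    apply integral_congr_ae
    filter_upwards with s
    by_cases hs : s ∈ Ioc (0:ℝ) t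
    · rw [indicator_of_mem hs, hFu, indicator_of_mem (by exact ⟨hs.1, hs.2⟩)]
    · rw [indicator_of_notMem hs, mul_zero, hFu, indicator_of_notMem]
      intro hc
      exact hs ⟨hc.1, hc.2⟩
  -- swap
  have swap_eq : ∫ t, ∫ s, Fu (t, s) ∂μ ∂μ = ∫ s, ∫ t, Fu (t, s) ∂μ ∂μ := by
    apply integral_integral_swap
    exact hFuint
  -- inner integral computation for a.e. s
  have inner_eq : ∫ s, ∫ t, Fu (t, s) ∂μ ∂μ
      = ∫ s, ((Real.exp (-b*s) - Real.exp (-b*T))/b) * ψ' s ∂μ := by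
    apply integral_congr_ae
    have h0 : ∀ᵐ s ∂μ, s ≠ 0 := by
      apply ae_restrict_of_ae
      rw [ae_iff]
      have : {x : ℝ | ¬ x ≠ 0} = {0} := by ext x; simp
      rw [this]
      exact measure_singleton 0
    filter_upwards [ae_restrict_mem measurableSet_Icc, h0] with s hs hs0
    have hs' : 0 < s := lt_of_le_of_ne hs.1 (Ne.symm hs0)
    have h2 : (fun t => Fu (t, s)) = (Ici s).indicator (fun t => Real.exp (-b*t) * ψ' s) := by
      funext t
      rw [hFu]
      simp only [Set.indicator_apply, Set.mem_Ici, hS, Set.mem_setOf_eq, hs', true_and, hG0]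
    rw [h2, integral_indicator measurableSet_Ici, hμ,
      Measure.restrict_restrict measurableSet_Ici]
    have h3 : Ici s ∩ Icc 0 T = Icc s T := by
      ext x; simp only [mem_inter_iff, mem_Ici, mem_Icc]
      constructor
      · rintro ⟨h1, _, h2⟩; exact ⟨h1, h2⟩
      · rintro ⟨h1, h2⟩; exact ⟨h1, le_trans (le_of_lt hs') h1, h2⟩
    rw [h3, integral_mul_const, MeasureTheory.integral_Icc_eq_integral_Ioc,
      ← intervalIntegral.integral_of_le hs.2, exp_interval_int (-b) s T (neg_ne_zero.mpr hb)]
    congr 1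
    rw [div_neg, ← neg_div, neg_sub]
  rw [lhs_eq, swap_eq, inner_eq]



lemma part2_algebra (b z s E : ℝ) (hb : b ≠ 0) (hs : 1 - s ≠ 0) (hE : 0 < E)
    (hsE : s * E^2 = 1) :
    (2*b*z/(E*(1-s)))^2 * ((s - 1)/(-2*b)) = 2*b*s*z^2/(1-s) := by
  have hE' : E ≠ 0 := ne_of_gt hE
  field_simp
  linear_combination (-(z^2*(1-s))) * hsE

lemma part2 (T b z : ℝ) (hT : 0 < T) (hb : b ≠ 0)
    (ψstar : ℝ → ℝ)
    (hψstar : ψstar = fun t =>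
      z * (Real.exp (b*t) - Real.exp (-b*t)) / (Real.exp (b*T) - Real.exp (-b*T))) :
    (∫ t in Set.Icc 0 T, (deriv ψstar t - b * ψstar t)^2) =
      2*b*Real.exp (-2*b*T)*z^2 / (1 - Real.exp (-2*b*T)) := by
  set D : ℝ := Real.exp (b*T) - Real.exp (-b*T) with hD
  have hbT : b*T ≠ 0 := mul_ne_zero hb (ne_of_gt hT)
  have hu1' : Real.exp (-(b*T)) ≠ 1 := by
    simp [Real.exp_eq_one_iff]
    exact ⟨hb, ne_of_gt hT⟩
  have hDne : D ≠ 0 := by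
    rw [hD, sub_ne_zero]
    intro h
    have := Real.exp_injective h
    simp at this
    exact hbT (by linarith)
  have hexp2 : Real.exp (-2*b*T) = Real.exp (-(b*T)) * Real.exp (-(b*T)) := by
    rw [← Real.exp_add]; ring_nf
  have h2ne : (1 : ℝ) - Real.exp (-2*b*T) ≠ 0 := by
    rw [hexp2, sub_ne_zero]
    intro h
    have : Real.exp (-(b*T)) = 1 := by
      nlinarith [Real.exp_pos (-(b*T))]
    exact hu1' this
  have hderiv : ∀ t : ℝ, HasDerivAt ψstar (z * (b*Real.exp (b*t) + b*Real.exp (-b*t)) / D) t := by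
    intro t
    rw [hψstar]
    have h1 : HasDerivAt (fun t : ℝ => b*t) b t := by
      simpa using (hasDerivAt_id t).const_mul b
    have h2 : HasDerivAt (fun t : ℝ => -b*t) (-b) t := by
      simpa using (hasDerivAt_id t).const_mul (-b)
    have := (((h1.exp.sub h2.exp).const_mul z).div_const D)
    exact this.congr_deriv (by ring)
  have hderiv' : ∀ t : ℝ, deriv ψstar t = z * (b*Real.exp (b*t) + b*Real.exp (-b*t)) / D :=
    fun t => (hderiv t).deriv
  have hintegrand : ∀ t : ℝ, (deriv ψstar t - b * ψstar t)^2
      = (2*b*z/D)^2 * Real.exp (-2*b*t) := by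
    intro t
    rw [hderiv' t, hψstar]
    have he : Real.exp (-(2*b*t)) = Real.exp (-(b*t)) * Real.exp (-(b*t)) := by
      rw [← Real.exp_add]; ring_nf
    field_simp
    rw [show -(b*t*2) = -(b*t) + -(b*t) by ring, Real.exp_add]; ring
  rw [MeasureTheory.integral_Icc_eq_integral_Ioc,
      ← intervalIntegral.integral_of_le (le_of_lt hT)]
  simp only [hintegrand]
  rw [intervalIntegral.integral_const_mul, exp_interval_int (-2*b) 0 T (by simpa using hb)]
  have hD2 : D = Real.exp (b*T) * (1 - Real.exp (-2*b*T)) := by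
    rw [hexp2, hD, mul_sub, mul_one]
    rw [← Real.exp_add, ← Real.exp_add]
    congr 2
    ring
  rw [hD2]
  have hEpos := Real.exp_pos (b*T)
  have hsE : Real.exp (-2*b*T) * (Real.exp (b*T))^2 = 1 := by
    rw [pow_two, ← Real.exp_add, ← Real.exp_add]
    rw [show -2*b*T + (b*T + b*T) = 0 by ring, Real.exp_zero]
  have hz0 : Real.exp (-2*b*0) = 1 := by norm_num
  rw [hz0]
  exact part2_algebra b z _ _ hb h2ne hEpos (by linear_combination hsE)

/-- Fixed-endpoint quadratic variational problem. For any absolutely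
continuous `ψ` with `ψ(0)=0`, `ψ(T)=z` and square-integrable derivative,
`∫₀ᵀ(ψ' − bψ)² ≥ 2b e^{−2bT} z² / (1−e^{−2bT})`, with equality for
`ψ*(t) = z(e^{bt} − e^{−bt})/(e^{bT} − e^{−bT})`. -/
theorem quadratic_variational_problem
    (T b z : ℝ) (hT : 0 < T) (hb : b ≠ 0)
    (ψ ψ' : ℝ → ℝ)
    (hL2 : MemLp ψ' 2 (volume.restrict (Set.Icc 0 T)))
    (hftc : ∀ t ∈ Set.Icc 0 T, ψ t = ∫ s in (0:ℝ)..t, ψ' s)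
    (hψT : ψ T = z)
    (ψstar : ℝ → ℝ)
    (hψstar : ψstar = fun t =>
      z * (Real.exp (b*t) - Real.exp (-b*t)) / (Real.exp (b*T) - Real.exp (-b*T))) :
    2*b*Real.exp (-2*b*T)*z^2 / (1 - Real.exp (-2*b*T)) ≤
      (∫ t in Set.Icc 0 T, (ψ' t - b * ψ t)^2) ∧
    (∫ t in Set.Icc 0 T, (deriv ψstar t - b * ψstar t)^2) =
      2*b*Real.exp (-2*b*T)*z^2 / (1 - Real.exp (-2*b*T)) := by
  refine ⟨?_, part2 T b z hT hb ψstar hψstar⟩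
  set μ := volume.restrict (Icc (0:ℝ) T) with hμ
  haveI hfin : IsFiniteMeasure μ :=
    ⟨by rw [hμ, Measure.restrict_apply_univ, Real.volume_Icc]; exact ENNReal.ofReal_lt_top⟩
  have hψ'int : Integrable ψ' μ := hL2.integrable one_le_two
  -- ψ agrees a.e. with a continuous function, hence is MemLp 2
  set φ : ℝ → ℝ := (Icc (0:ℝ) T).indicator ψ' with hφ
  have hφint : Integrable φ volume := by
    rw [hφ, integrable_indicator_iff measurableSet_Icc]
    exact hψ'int
  set G : ℝ → ℝ := fun t => ∫ s in (0:ℝ)..t, φ s with hG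
  have hGcont : Continuous G := hφint.continuous_primitive 0
  have hψG : ∀ t ∈ Icc (0:ℝ) T, ψ t = G t := by
    intro t ht
    rw [hftc t ht, hG]
    apply intervalIntegral.integral_congr
    intro s hs
    rw [Set.uIcc_of_le ht.1] at hs
    have hmem : s ∈ Icc (0:ℝ) T := ⟨hs.1, le_trans hs.2 ht.2⟩
    simp [hφ, Set.indicator_of_mem hmem]
  obtain ⟨M, hM⟩ := (isCompact_Icc : IsCompact (Icc (0:ℝ) T)).exists_bound_of_continuousOn
    hGcont.continuousOn
  have hGmem : MemLp G 2 μ :=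
    MemLp.of_bound hGcont.aestronglyMeasurable M
      ((ae_restrict_mem measurableSet_Icc).mono fun x hx => hM x hx)
  have haeGψ : G =ᵐ[μ] ψ := (ae_restrict_mem measurableSet_Icc).mono fun t ht => (hψG t ht).symm
  have hψmem : MemLp ψ 2 μ := hGmem.ae_eq haeGψ
  have hψint : Integrable ψ μ := hψmem.integrable one_le_two
  -- basic bound for the exponential weight
  have hbd : ∀ t ∈ Icc (0:ℝ) T, ‖Real.exp (-b*t)‖ ≤ Real.exp (abs b * T) := by
    intro t ht
    rw [Real.norm_eq_abs, Real.abs_exp]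
    apply Real.exp_le_exp.mpr
    calc -b*t ≤ |(-b)*t| := le_abs_self _
      _ = abs b * |t| := by rw [abs_mul, abs_neg]
      _ ≤ abs b * T := by
          apply mul_le_mul_of_nonneg_left _ (abs_nonneg b)
          rw [abs_of_nonneg ht.1]; exact ht.2
  have hexpmeas : AEStronglyMeasurable (fun t => Real.exp (-b*t)) μ :=
    (Real.continuous_exp.comp (continuous_const.mul continuous_id)).aestronglyMeasurable
  have hgmem : MemLp (fun t => Real.exp (-b*t)) 2 μ :=
    MemLp.of_bound hexpmeas (Real.exp (abs b * T))
      ((ae_restrict_mem measurableSet_Icc).mono fun t ht => hbd t ht)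
  -- integrabilities
  have hI1 : Integrable (fun t => Real.exp (-b*t) * ψ' t) μ :=
    hψ'int.bdd_mul hexpmeas ((ae_restrict_mem measurableSet_Icc).mono fun t ht => hbd t ht)
  have hI3 : Integrable (fun t => Real.exp (-b*t) * ψ t) μ :=
    hψint.bdd_mul hexpmeas ((ae_restrict_mem measurableSet_Icc).mono fun t ht => hbd t ht)
  have hwmeas : AEStronglyMeasurable (fun s => (Real.exp (-b*s) - Real.exp (-b*T))/b) μ :=
    (((Real.continuous_exp.comp (continuous_const.mul continuous_id)).sub
      continuous_const).div_const b).aestronglyMeasurable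
  have hI2 : Integrable (fun s => (Real.exp (-b*s) - Real.exp (-b*T))/b * ψ' s) μ := by
    apply hψ'int.bdd_mul hwmeas (c := (Real.exp (abs b * T) + Real.exp (abs b * T))/|b|)
    filter_upwards [ae_restrict_mem measurableSet_Icc] with s hs
    rw [norm_div, Real.norm_eq_abs (r := b)]
    have hbabs : (0:ℝ) < |b| := abs_pos.mpr hb
    exact (div_le_div_iff_of_pos_right hbabs).mpr ((norm_sub_le _ _).trans
      (add_le_add (hbd s hs) (hbd T ⟨le_of_lt hT, le_refl T⟩)))
  -- value of ∫ ψ'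
  have hz : ∫ t, ψ' t ∂μ = z := by
    rw [hμ, MeasureTheory.integral_Icc_eq_integral_Ioc,
      ← intervalIntegral.integral_of_le (le_of_lt hT),
      ← hftc T ⟨le_of_lt hT, le_refl T⟩, hψT]
  -- the key identity via Fubini
  have key : ∫ t, (ψ' t - b*ψ t) * Real.exp (-b*t) ∂μ = Real.exp (-b*T) * z := by
    have hsplit : (fun t => (ψ' t - b*ψ t) * Real.exp (-b*t))
        = fun t => Real.exp (-b*t) * ψ' t - b * (Real.exp (-b*t) * ψ t) := by
      funext t; ring
    rw [hsplit, integral_sub hI1 (hI3.const_mul b), integral_const_mul b,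
      fubini_step T b hT hb ψ ψ' hψ'int hftc,
      ← integral_const_mul b, ← integral_sub hI1 (hI2.const_mul b)]
    have heq : (fun s => Real.exp (-b*s) * ψ' s
        - b * ((Real.exp (-b*s) - Real.exp (-b*T))/b * ψ' s))
        = fun s => Real.exp (-b*T) * ψ' s := by
      funext s
      field_simp
      ring
    rw [heq, integral_const_mul, hz]
  -- compute ∫ g²
  have hg2 : ∫ t, (Real.exp (-b*t))^2 ∂μ = (1 - Real.exp (-2*b*T))/(2*b) := by
    have hsq : (fun t => (Real.exp (-b*t))^2) = fun t => Real.exp (-2*b*t) := by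
      funext t
      rw [pow_two, ← Real.exp_add]
      congr 1; ring
    rw [hsq, hμ, MeasureTheory.integral_Icc_eq_integral_Ioc,
      ← intervalIntegral.integral_of_le (le_of_lt hT),
      exp_interval_int (-2*b) 0 T (by simpa using hb)]
    rw [show -2*b*0 = 0 by ring, Real.exp_zero,
      show ((-2*b) : ℝ) = -(2*b) by ring, div_neg, ← neg_div, neg_sub]
  have hCpos : (0:ℝ) < (1 - Real.exp (-2*b*T))/(2*b) := by
    rcases lt_or_gt_of_ne hb with hbneg | hbpos
    · apply div_pos_of_neg_of_neg
      · rw [sub_neg]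
        calc (1:ℝ) = Real.exp 0 := Real.exp_zero.symm
          _ < Real.exp (-2*b*T) := Real.exp_lt_exp.mpr (by nlinarith)
      · linarith
    · apply div_pos
      · rw [sub_pos]
        calc Real.exp (-2*b*T) < Real.exp 0 := Real.exp_lt_exp.mpr (by nlinarith)
          _ = 1 := Real.exp_zero
      · linarith
  -- Cauchy–Schwarz
  have hfmem : MemLp (fun t => ψ' t - b * ψ t) 2 μ := hL2.sub (hψmem.const_mul b)
  have hCS := cs_int μ (fun t => ψ' t - b * ψ t) (fun t => Real.exp (-b*t)) hfmem hgmem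
    (by rw [hg2]; exact hCpos)
  rw [key, hg2] at hCS
  -- conclude
  have hB2 : (Real.exp (-b*T) * z)^2 = Real.exp (-2*b*T) * z^2 := by
    rw [mul_pow, pow_two, ← Real.exp_add]
    congr 2; ring
  rw [hB2] at hCS
  rw [show 2*b*Real.exp (-2*b*T)*z^2 / (1 - Real.exp (-2*b*T))
      = (Real.exp (-2*b*T)*z^2) / ((1 - Real.exp (-2*b*T))/(2*b)) by
    rw [div_div_eq_mul_div]; ring_nf]
  rw [div_le_iff₀ hCpos]
  exact hCS
end

section
/- Let α > 0, c > 0, and let g : [0,∞) → ℝ be a continuous function with lim_{y → ∞} g(y) / y^α = −c. Then there exists y₀ ≥ 0 such that z ↦ e^{g(z)} is integrable on [y₀, ∞), and lim_{y → ∞} y^{−α} · log ∫_y^∞ e^{g(z)} dz = −c. -/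
open MeasureTheory Set Filter

lemma cont_exp_neg_rpow (k α : ℝ) (hα : 0 < α) :
    Continuous (fun z : ℝ => Real.exp (-(k * z ^ α))) := by
  apply Real.continuous_exp.comp
  apply Continuous.neg
  apply Continuous.mul continuous_const
  exact continuous_iff_continuousAt.2 fun x => Real.continuousAt_rpow_const x α (Or.inr hα.le)

lemma integrableOn_exp_neg_k_rpow (k α : ℝ) (hk : 0 < k) (hα : 0 < α) {Y : ℝ} (hY : 0 ≤ Y) :
    IntegrableOn (fun z : ℝ => Real.exp (-(k * z ^ α))) (Ici Y) := by
  have hcont := cont_exp_neg_rpow k α hα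
  have hlo : ∀ᶠ z in atTop, ‖Real.log z‖ ≤ (k/2) * ‖z ^ α‖ :=
    (isLittleO_log_rpow_atTop hα).def (by positivity)
  obtain ⟨X, hX⟩ :=
    ((hlo.and (eventually_ge_atTop (max Y 1))).and (eventually_ge_atTop 1)).exists_forall_of_atTop
  have hXY : Y ≤ X := le_trans (le_max_left Y 1) (hX X le_rfl).1.2
  have hX1 : (1:ℝ) ≤ X := (hX X le_rfl).2
  have hsplit : Ici Y = Icc Y X ∪ Ici X := (Icc_union_Ici_eq_Ici hXY).symm
  rw [hsplit]
  refine IntegrableOn.union (hcont.integrableOn_Icc) ?_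
  have h2 : IntegrableOn (fun z : ℝ => z ^ (-2 : ℝ)) (Ici X) := by
    rw [integrableOn_Ici_iff_integrableOn_Ioi]
    exact integrableOn_Ioi_rpow_of_lt (by norm_num) (lt_of_lt_of_le one_pos hX1)
  refine Integrable.mono' h2 (hcont.aestronglyMeasurable.restrict) ?_
  refine (ae_restrict_iff' measurableSet_Ici).2 (ae_of_all _ fun z hz => ?_)
  have hz1 : (1:ℝ) ≤ z := hX1.trans hz
  have hz0 : (0:ℝ) < z := lt_of_lt_of_le one_pos hz1
  have hlog : Real.log z ≤ (k/2) * z ^ α := by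
    have := (hX z hz).1.1
    rwa [Real.norm_eq_abs, Real.norm_eq_abs, abs_of_nonneg (Real.log_nonneg hz1),
      abs_of_nonneg (Real.rpow_nonneg hz0.le α)] at this
  rw [Real.norm_eq_abs, abs_of_nonneg (Real.exp_pos _).le,
    show z ^ (-2:ℝ) = Real.exp (Real.log z * (-2)) from Real.rpow_def_of_pos hz0 _]
  apply Real.exp_le_exp.2
  nlinarith

lemma g_bounds_aux {α c : ℝ} {g : ℝ → ℝ}
    (hlim : Tendsto (fun y => g y / y ^ α) atTop (nhds (-c)))
    {δ : ℝ} (hδ : 0 < δ) :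
    ∃ Y : ℝ, 1 ≤ Y ∧ ∀ z, Y ≤ z → -((c+δ) * z ^ α) ≤ g z ∧ g z ≤ -((c-δ) * z ^ α) := by
  have h1 : ∀ᶠ y in atTop, dist (g y / y ^ α) (-c) < δ := Metric.tendsto_nhds.mp hlim δ hδ
  obtain ⟨Y, hY⟩ := (h1.and (eventually_ge_atTop 1)).exists_forall_of_atTop
  refine ⟨max Y 1, le_max_right Y 1, fun z hz => ?_⟩
  have hz' := hY z (le_trans (le_max_left Y 1) hz)
  have hz1 : (1:ℝ) ≤ z := hz'.2
  have hzα : (0:ℝ) < z ^ α := Real.rpow_pos_of_pos (lt_of_lt_of_le one_pos hz1) α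
  have habs : |g z / z ^ α + c| < δ := by
    simpa [Real.dist_eq, sub_neg_eq_add] using hz'.1
  obtain ⟨hl, hr⟩ := abs_lt.1 habs
  constructor
  · have := (lt_div_iff₀ hzα).1 (by linarith : -c - δ < g z / z ^ α)
    nlinarith
  · have := (div_lt_iff₀ hzα).1 (by linarith : g z / z ^ α < -c + δ)
    nlinarith

/-- If `g` is continuous on `[0,∞)` and `g(y)/y^α → −c` with `α, c > 0`,
then `e^{g}` is eventually integrable and `y^{−α} log ∫_y^∞ e^{g(z)} dz → −c`. -/
theorem log_tail_integral_asymptotics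
    (α c : ℝ) (hα : 0 < α) (hc : 0 < c)
    (g : ℝ → ℝ) (hg : ContinuousOn g (Set.Ici 0))
    (hlim : Tendsto (fun y => g y / y ^ α) atTop (nhds (-c))) :
    ∃ y₀ : ℝ, 0 ≤ y₀ ∧
      IntegrableOn (fun z => Real.exp (g z)) (Set.Ici y₀) ∧
      Tendsto (fun y => y ^ (-α) * Real.log (∫ z in Set.Ioi y, Real.exp (g z)))
        atTop (nhds (-c)) := by
  obtain ⟨Y₀, hY₀1, hY₀⟩ := g_bounds_aux hlim (half_pos hc)
  have hY₀0 : (0:ℝ) ≤ Y₀ := zero_le_one.trans hY₀1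
  have hint : IntegrableOn (fun z => Real.exp (g z)) (Ici Y₀) := by
    refine Integrable.mono' (integrableOn_exp_neg_k_rpow (c/2) α (half_pos hc) hα hY₀0)
      ((Real.continuous_exp.comp_continuousOn
        (hg.mono (Ici_subset_Ici.2 hY₀0))).aestronglyMeasurable measurableSet_Ici) ?_
    refine (ae_restrict_iff' measurableSet_Ici).2 (ae_of_all _ fun z hz => ?_)
    rw [Real.norm_eq_abs, abs_of_nonneg (Real.exp_pos _).le]
    apply Real.exp_le_exp.2
    have h := (hY₀ z hz).2
    nlinarith
  refine ⟨Y₀, hY₀0, hint, ?_⟩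
  rw [Metric.tendsto_nhds]
  intro ε hε
  set δ : ℝ := min ε c / 4 with hδdef
  have hδ : 0 < δ := by positivity
  have hδε : 4 * δ ≤ ε := by
    have := min_le_left ε c; rw [hδdef]; linarith
  have hδc : 4 * δ ≤ c := by
    have := min_le_right ε c; rw [hδdef]; linarith
  obtain ⟨Y₁, hY₁1, hY₁⟩ := g_bounds_aux hlim hδ
  set Y : ℝ := max Y₀ Y₁ with hYdef
  have hY1 : (1:ℝ) ≤ Y := hY₀1.trans (le_max_left _ _)
  set C : ℝ := ∫ z in Ici (1:ℝ), Real.exp (-(δ * z ^ α)) with hCdef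
  set C' : ℝ := max C 1 with hC'def
  have hC'1 : (1:ℝ) ≤ C' := le_max_right _ _
  have hC'0 : (0:ℝ) < C' := lt_of_lt_of_le one_pos hC'1
  have hIδ : IntegrableOn (fun z : ℝ => Real.exp (-(δ * z ^ α))) (Ici (1:ℝ)) :=
    integrableOn_exp_neg_k_rpow δ α hδ hα zero_le_one
  -- key bounds for y ≥ Y
  have key : ∀ y : ℝ, Y ≤ y →
      Real.exp (-((c+δ) * (y+1) ^ α)) ≤ (∫ z in Ioi y, Real.exp (g z)) ∧
      (∫ z in Ioi y, Real.exp (g z)) ≤ C' * Real.exp (-((c - 2*δ) * y ^ α)) := by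
    intro y hy
    have hy1 : (1:ℝ) ≤ y := hY1.trans hy
    have hy0 : (0:ℝ) < y := lt_of_lt_of_le one_pos hy1
    have hyY₀ : Y₀ ≤ y := (le_max_left _ _).trans hy
    have hyY₁ : Y₁ ≤ y := (le_max_right _ _).trans hy
    have hIy : IntegrableOn (fun z => Real.exp (g z)) (Ioi y) :=
      hint.mono_set (fun z hz => le_trans hyY₀ (le_of_lt hz))
    constructor
    · -- lower bound
      have hvol : (volume (Ioc y (y+1))).toReal = 1 := by
        simp [Real.volume_Ioc]
      have l2 : Real.exp (-((c+δ) * (y+1) ^ α)) ≤ ∫ z in Ioc y (y+1), Real.exp (g z) := by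
        have hconst : ∫ _z in Ioc y (y+1), Real.exp (-((c+δ) * (y+1) ^ α))
            = Real.exp (-((c+δ) * (y+1) ^ α)) := by
          rw [setIntegral_const, measureReal_def, hvol, one_smul]
        rw [← hconst]
        refine setIntegral_mono_on
          (integrableOn_const measure_Ioc_lt_top.ne enorm_ne_top)
          (hIy.mono_set Ioc_subset_Ioi_self) measurableSet_Ioc (fun z hz => ?_)
        apply Real.exp_le_exp.2
        have hz1 : Y₁ ≤ z := hyY₁.trans hz.1.le
        have hlow := (hY₁ z hz1).1
        have hz0 : (0:ℝ) ≤ z := (hy0.trans hz.1).le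
        have hrp : z ^ α ≤ (y+1) ^ α := Real.rpow_le_rpow hz0 hz.2 hα.le
        nlinarith [Real.rpow_nonneg hz0 α]
      refine l2.trans ?_
      exact setIntegral_mono_set hIy (ae_of_all _ fun z => (Real.exp_pos _).le)
        (HasSubset.Subset.eventuallyLE Ioc_subset_Ioi_self)
    · -- upper bound
      have hIu : IntegrableOn
          (fun z : ℝ => Real.exp (-((c - 2*δ) * y ^ α)) * Real.exp (-(δ * z ^ α))) (Ioi y) :=
        (hIδ.mono_set (fun z hz => hy1.trans hz.le)).const_mul _
      have u1 : (∫ z in Ioi y, Real.exp (g z))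
          ≤ ∫ z in Ioi y, Real.exp (-((c - 2*δ) * y ^ α)) * Real.exp (-(δ * z ^ α)) := by
        refine setIntegral_mono_on hIy hIu measurableSet_Ioi (fun z hz => ?_)
        rw [← Real.exp_add]
        apply Real.exp_le_exp.2
        have hz1 : Y₁ ≤ z := hyY₁.trans hz.le
        have hup := (hY₁ z hz1).2
        have hz0 : (0:ℝ) ≤ z := (hy0.trans hz).le
        have hrp : y ^ α ≤ z ^ α := Real.rpow_le_rpow hy0.le hz.le hα.le
        nlinarith
      have u2 : (∫ z in Ioi y, Real.exp (-((c - 2*δ) * y ^ α)) * Real.exp (-(δ * z ^ α)))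
          = Real.exp (-((c - 2*δ) * y ^ α)) * ∫ z in Ioi y, Real.exp (-(δ * z ^ α)) :=
        integral_const_mul _ _
      have u3 : (∫ z in Ioi y, Real.exp (-(δ * z ^ α))) ≤ C := by
        rw [hCdef]
        refine setIntegral_mono_set hIδ (ae_of_all _ fun z => (Real.exp_pos _).le)
          (HasSubset.Subset.eventuallyLE (fun z hz => hy1.trans hz.le))
      calc (∫ z in Ioi y, Real.exp (g z))
          ≤ Real.exp (-((c - 2*δ) * y ^ α)) * ∫ z in Ioi y, Real.exp (-(δ * z ^ α)) := by
            rw [← u2]; exact u1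
        _ ≤ Real.exp (-((c - 2*δ) * y ^ α)) * C' :=
            mul_le_mul_of_nonneg_left (u3.trans (le_max_left _ _)) (Real.exp_pos _).le
        _ = C' * Real.exp (-((c - 2*δ) * y ^ α)) := mul_comm _ _
  -- tendsto facts
  have t1 : Tendsto (fun y : ℝ => y ^ (-α) * Real.log C') atTop (nhds 0) := by
    simpa using (tendsto_rpow_neg_atTop hα).mul_const (Real.log C')
  have t2 : Tendsto (fun y : ℝ => -((c+δ) * ((y+1) ^ α * y ^ (-α)))) atTop (nhds (-(c+δ))) := by
    have hinner : Tendsto (fun y : ℝ => (y+1)/y) atTop (nhds 1) := by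
      have h0 : Tendsto (fun y : ℝ => 1 + y⁻¹) atTop (nhds (1 + 0)) :=
        tendsto_const_nhds.add tendsto_inv_atTop_zero
      rw [add_zero] at h0
      refine h0.congr' ?_
      filter_upwards [eventually_gt_atTop (0:ℝ)] with y hy
      field_simp
    have hrpow : Tendsto (fun y : ℝ => ((y+1)/y) ^ α) atTop (nhds 1) := by
      have hcont : ContinuousAt (fun x : ℝ => x ^ α) 1 :=
        Real.continuousAt_rpow_const 1 α (Or.inl one_ne_zero)
      have := hcont.tendsto.comp hinner
      simpa [Real.one_rpow, Function.comp_def] using this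
    have heq : ∀ᶠ y : ℝ in atTop, ((y+1)/y) ^ α = (y+1) ^ α * y ^ (-α) := by
      filter_upwards [eventually_gt_atTop (0:ℝ)] with y hy
      rw [Real.div_rpow (by linarith) hy.le, Real.rpow_neg hy.le, div_eq_mul_inv]
    have h := (hrpow.congr' heq).const_mul (-(c+δ))
    rw [mul_one] at h
    exact h.congr (fun y => by ring)
  have e1 : ∀ᶠ y : ℝ in atTop, y ^ (-α) * Real.log C' < δ :=
    t1.eventually (eventually_lt_nhds hδ)
  have e2 : ∀ᶠ y : ℝ in atTop, -c - ε < -((c+δ) * ((y+1) ^ α * y ^ (-α))) :=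
    t2.eventually (eventually_gt_nhds (by linarith))
  filter_upwards [e1, e2, eventually_ge_atTop Y, eventually_ge_atTop (1:ℝ)]
    with y h1 h2 hyY hy1
  obtain ⟨kl, ku⟩ := key y hyY
  have hy0 : (0:ℝ) < y := lt_of_lt_of_le one_pos hy1
  have hTpos : 0 < ∫ z in Ioi y, Real.exp (g z) := lt_of_lt_of_le (Real.exp_pos _) kl
  have hyiα : (0:ℝ) < y ^ (-α) := Real.rpow_pos_of_pos hy0 _
  have hmul : y ^ (-α) * y ^ α = 1 := by
    rw [← Real.rpow_add hy0]; simp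
  have hlogU : Real.log (∫ z in Ioi y, Real.exp (g z)) ≤ Real.log C' + -((c - 2*δ) * y ^ α) := by
    have h := Real.log_le_log hTpos ku
    rwa [Real.log_mul (ne_of_gt hC'0) (Real.exp_ne_zero _), Real.log_exp] at h
  have hlogL : -((c+δ) * (y+1) ^ α) ≤ Real.log (∫ z in Ioi y, Real.exp (g z)) := by
    have h := Real.log_le_log (Real.exp_pos _) kl
    rwa [Real.log_exp] at h
  have hU : y ^ (-α) * Real.log (∫ z in Ioi y, Real.exp (g z))
      ≤ y ^ (-α) * Real.log C' - (c - 2*δ) := by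
    have h := mul_le_mul_of_nonneg_left hlogU hyiα.le
    have hexpand : y ^ (-α) * (Real.log C' + -((c - 2*δ) * y ^ α))
        = y ^ (-α) * Real.log C' - (c - 2*δ) * (y ^ (-α) * y ^ α) := by ring
    rw [hexpand, hmul, mul_one] at h
    exact h
  have hL : -((c+δ) * ((y+1) ^ α * y ^ (-α)))
      ≤ y ^ (-α) * Real.log (∫ z in Ioi y, Real.exp (g z)) := by
    have h := mul_le_mul_of_nonneg_left hlogL hyiα.le
    calc -((c+δ) * ((y+1) ^ α * y ^ (-α))) = y ^ (-α) * -((c+δ) * (y+1) ^ α) := by ring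
      _ ≤ _ := h
  rw [Real.dist_eq]
  rw [abs_lt]
  constructor
  · have : -c - ε < y ^ (-α) * Real.log (∫ z in Ioi y, Real.exp (g z)) :=
      lt_of_lt_of_le h2 hL
    linarith
  · have : y ^ (-α) * Real.log (∫ z in Ioi y, Real.exp (g z)) < δ - (c - 2*δ) :=
      lt_of_le_of_lt hU (by linarith)
    linarith
end

section
/- Let T > 0 and β < 0, and set a := Tβ/2 (so a < 0). Then: (i) the unique ω ∈ (0,π) satisfying ω · cos ω = a · sin ω lies in (π/2, π); (ii) this ω is the unique solution in (0,∞) of the equation ω = π + arctan(ω/a) (equivalently, ω = π + arctan(2ω/(Tβ))). -/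
/-- For `β < 0` and `a = Tβ/2`, the unique `ω ∈ (0,π)` solving
`ω cos ω = a sin ω` lies in `(π/2, π)` and is the unique solution in `(0,∞)` of
`ω = π + arctan(ω/a)` (equivalently `ω = π + arctan(2ω/(Tβ))`). -/
theorem trig_root_arctan_characterization
    (T β : ℝ) (hT : 0 < T) (hβ : β < 0)
    (a : ℝ) (ha : a = T * β / 2)
    (ω : ℝ) (hω : ω ∈ Set.Ioo 0 Real.pi)
    (heq : ω * Real.cos ω = a * Real.sin ω) :
    ω ∈ Set.Ioo (Real.pi / 2) Real.pi ∧
    ω = Real.pi + Real.arctan (ω / a) ∧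
    ω = Real.pi + Real.arctan (2 * ω / (T * β)) ∧
    ∀ ω' : ℝ, 0 < ω' → ω' = Real.pi + Real.arctan (ω' / a) → ω' = ω := by
  obtain ⟨hω0, hωπ⟩ := hω
  have hTβ : T * β < 0 := mul_neg_of_pos_of_neg hT hβ
  have ha0 : a < 0 := by rw [ha]; linarith
  have hsin : 0 < Real.sin ω := Real.sin_pos_of_pos_of_lt_pi hω0 hωπ
  have hcos : Real.cos ω < 0 := by
    by_contra h
    push_neg at h
    nlinarith [mul_nonneg hω0.le h, mul_neg_of_neg_of_pos ha0 hsin]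
  have hhalf : Real.pi / 2 < ω := by
    by_contra h
    push_neg at h
    have : 0 ≤ Real.cos ω := Real.cos_nonneg_of_mem_Icc ⟨by linarith, h⟩
    linarith
  have htan : Real.tan ω = ω / a := by
    have hc : Real.cos ω ≠ 0 := ne_of_lt hcos
    have ha' : a ≠ 0 := ne_of_lt ha0
    rw [Real.tan_eq_sin_div_cos]
    field_simp
    linarith [heq]
  have hmain : ω = Real.pi + Real.arctan (ω / a) := by
    have h1 : Real.tan (ω - Real.pi) = ω / a := by
      rw [Real.tan_periodic.sub_eq, htan]
    have h2 : Real.arctan (ω / a) = ω - Real.pi := by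
      rw [← h1, Real.arctan_tan (by linarith [Real.pi_pos]) (by linarith)]
    linarith
  have hdiv : 2 * ω / (T * β) = ω / a := by
    rw [ha]; field_simp
  refine ⟨⟨hhalf, hωπ⟩, hmain, by rw [hdiv]; exact hmain, ?_⟩
  intro ω' hω' hfix
  rcases lt_trichotomy ω' ω with h | h | h
  · exfalso
    have : ω / a < ω' / a := div_lt_div_of_neg_of_lt ha0 h
    have := Real.arctan_strictMono this
    linarith
  · exact h
  · exfalso
    have : ω' / a < ω / a := div_lt_div_of_neg_of_lt ha0 h
    have := Real.arctan_strictMono this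
    linarith
end
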